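/- arXiv:2006.02182 — 3 statements merged into one kernel-verified Lean document; each statement's English description precedes it below -/
import Mathlib

section
/- Let Λ be a ring and let C be a class consisting of finitely presented Λ-modules. If {M_α}_{α≤σ} is a strict C-filtration of a finitely generated Λ-module M (i.e. a continuous chain with M_0 = 0, M_σ = M, M_α ⊊ M_{α+1} for every α < σ, and each factor M_{α+1}/M_α isomorphic to a member of C), then the ordinal σ is finite. -/
open CategoryTheory Function

universe u

namespace GorensteinFDC

variable (Λ : Type u) [Ring Λ]

/-- The data `0 → A → M → B → 0` is a short exact sequence of `Λ`-modules. -/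
def IsSES {A M B : ModuleCat.{u} Λ} (i : A ⟶ M) (p : M ⟶ B) : Prop :=
  Function.Injective i ∧ Function.Surjective p ∧ Function.Exact i p

/-- `Ext¹_Λ(A, B) = 0`, phrased as: every short exact sequence `0 → B → E → A → 0` splits. -/
def Ext1Zero (A B : ModuleCat.{u} Λ) : Prop :=
  ∀ (E : ModuleCat.{u} Λ) (i : B ⟶ E) (p : E ⟶ A),
    IsSES Λ i p → ∃ s : A ⟶ E, s ≫ p = 𝟙 A

/-- The right `Ext¹`-orthogonal class `C^⊥`. -/
def rightPerp (C : Set (ModuleCat.{u} Λ)) : Set (ModuleCat.{u} Λ) :=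
  {X | ∀ A ∈ C, Ext1Zero Λ A X}

/-- The left `Ext¹`-orthogonal class `^⊥C`. -/
def leftPerp (C : Set (ModuleCat.{u} Λ)) : Set (ModuleCat.{u} Λ) :=
  {X | ∀ B ∈ C, Ext1Zero Λ X B}

/-- `(L, R)` is a cotorsion pair. -/
def IsCotorsionPair (L R : Set (ModuleCat.{u} Λ)) : Prop :=
  L = leftPerp Λ R ∧ R = rightPerp Λ L

/-- `K` is a (first) syzygy of `A`: there is a short exact sequence `0 → K → P → A → 0`
with `P` projective. -/
def IsSyzygyOf (K A : ModuleCat.{u} Λ) : Prop :=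
  ∃ (P : ModuleCat.{u} Λ) (i : K ⟶ P) (p : P ⟶ A), Projective P ∧ IsSES Λ i p

/-- `K` is an `n`-th syzygy of `A` (the `0`-th syzygy being `A` itself, up to isomorphism). -/
def IsNthSyzygyOf : ℕ → ModuleCat.{u} Λ → ModuleCat.{u} Λ → Prop
  | 0, K, A => Nonempty (K ≅ A)
  | n + 1, K, A => ∃ L, IsNthSyzygyOf n L A ∧ IsSyzygyOf Λ K L

/-- `Ext^i_Λ(A, B) = 0` for all `i ≥ 1`, phrased via vanishing of `Ext¹` on all syzygies
(using `Ext^{n+1}(A, B) ≅ Ext¹(Ωⁿ A, B)`). -/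
def ExtGe1Zero (A B : ModuleCat.{u} Λ) : Prop :=
  ∀ (n : ℕ) (K : ModuleCat.{u} Λ), IsNthSyzygyOf Λ n K A → Ext1Zero Λ K B

/-- The class `M^{⊥∞}` of modules `X` with `Ext^i(M, X) = 0` for all `i ≥ 1`. -/
def perpInfOf (M : ModuleCat.{u} Λ) : Set (ModuleCat.{u} Λ) :=
  {X | ExtGe1Zero Λ M X}

/-- `M` is Gorenstein projective: it is (isomorphic to) a kernel in an exact complex of
projectives which stays exact under `Hom_Λ(-, Q)` for every projective `Q`. -/
def IsGorensteinProjective (M : ModuleCat.{u} Λ) : Prop :=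
  ∃ (P : ℤ → ModuleCat.{u} Λ) (d : ∀ i : ℤ, P (i + 1) ⟶ P i),
    (∀ i, Projective (P i)) ∧
    (∀ i, Function.Exact (d (i + 1)) (d i)) ∧
    (∀ (Q : ModuleCat.{u} Λ), Projective Q →
      ∀ (i : ℤ) (g : P (i + 1) ⟶ Q), d (i + 1) ≫ g = 0 → ∃ h : P i ⟶ Q, d i ≫ h = g) ∧
    Nonempty (M ≃ₗ[Λ] LinearMap.ker (d (-1)).hom)

/-- `M` is strongly Gorenstein projective: as above, but with all terms and all
differentials of the complete resolution equal. -/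
def IsStronglyGorensteinProjective (M : ModuleCat.{u} Λ) : Prop :=
  ∃ (P : ModuleCat.{u} Λ) (f : P ⟶ P),
    Projective P ∧ Function.Exact f f ∧
    (∀ (Q : ModuleCat.{u} Λ), Projective Q →
      ∀ g : P ⟶ Q, f ≫ g = 0 → ∃ h : P ⟶ Q, f ≫ h = g) ∧
    Nonempty (M ≃ₗ[Λ] LinearMap.ker f.hom)

/-- Resolution dimension of `M` with respect to a class `C` is at most `n`. -/
def ResolDimLe (C : Set (ModuleCat.{u} Λ)) : ℕ → ModuleCat.{u} Λ → Prop
  | 0, M => M ∈ C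
  | n + 1, M => ∃ (K G : ModuleCat.{u} Λ) (i : K ⟶ G) (p : G ⟶ M),
      G ∈ C ∧ IsSES Λ i p ∧ ResolDimLe C n K

/-- Coresolution dimension of `M` with respect to a class `C` is at most `n`. -/
def CoresolDimLe (C : Set (ModuleCat.{u} Λ)) : ℕ → ModuleCat.{u} Λ → Prop
  | 0, M => M ∈ C
  | n + 1, M => ∃ (T₀ K : ModuleCat.{u} Λ) (i : M ⟶ T₀) (p : T₀ ⟶ K),
      T₀ ∈ C ∧ IsSES Λ i p ∧ CoresolDimLe C n K

/-- `pd_Λ(M) ≤ n`. -/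
def ProjDimLe (n : ℕ) (M : ModuleCat.{u} Λ) : Prop :=
  ResolDimLe Λ {P | Projective P} n M

/-- `Gpd_Λ(M) ≤ n`. -/
def GProjDimLe (n : ℕ) (M : ModuleCat.{u} Λ) : Prop :=
  ResolDimLe Λ {G | IsGorensteinProjective Λ G} n M

/-- The projective dimension of `M`, as an extended natural number. -/
noncomputable def projDim (M : ModuleCat.{u} Λ) : ℕ∞ :=
  sInf {d : ℕ∞ | ∃ n : ℕ, d = n ∧ ProjDimLe Λ n M}

/-- The Gorenstein projective dimension of `M`, as an extended natural number. -/
noncomputable def gProjDim (M : ModuleCat.{u} Λ) : ℕ∞ :=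
  sInf {d : ℕ∞ | ∃ n : ℕ, d = n ∧ GProjDimLe Λ n M}

/-- The little finitistic dimension `fpd(Λ)`. -/
noncomputable def fpd : ℕ∞ :=
  sSup {d : ℕ∞ | ∃ M : ModuleCat.{u} Λ, Module.Finite Λ M ∧ projDim Λ M = d ∧ d ≠ ⊤}

/-- The big finitistic dimension `FPD(Λ)`. -/
noncomputable def FPD : ℕ∞ :=
  sSup {d : ℕ∞ | ∃ M : ModuleCat.{u} Λ, projDim Λ M = d ∧ d ≠ ⊤}

/-- `M` is strongly finitely presented (i.e. `M ∈ mod(Λ)`): it admits a projective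
resolution by finitely generated projective modules. -/
def StronglyFinitelyPresented (M : ModuleCat.{u} Λ) : Prop :=
  ∃ (P : ℕ → ModuleCat.{u} Λ) (d : ∀ n : ℕ, P (n + 1) ⟶ P n) (ε : P 0 ⟶ M),
    (∀ n, Projective (P n) ∧ Module.Finite Λ (P n)) ∧
    Function.Surjective ε ∧ Function.Exact (d 0) ε ∧
    (∀ n, Function.Exact (d (n + 1)) (d n))

/-- The class `mod(Λ)` of strongly finitely presented modules. -/
def modFin : Set (ModuleCat.{u} Λ) :=
  {M | StronglyFinitelyPresented Λ M}

/-- The class `P_n^fin` of strongly finitely presented modules of projective dimension `≤ n`. -/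
def PFin (n : ℕ) : Set (ModuleCat.{u} Λ) :=
  {M | StronglyFinitelyPresented Λ M ∧ ProjDimLe Λ n M}

/-- The class `P_∞^fin` of finitely generated modules of finite projective dimension. -/
def PInfFin : Set (ModuleCat.{u} Λ) :=
  {M | Module.Finite Λ M ∧ ∃ n : ℕ, ProjDimLe Λ n M}

/-- The class `GP_n^fin` of strongly finitely presented modules of Gorenstein projective
dimension `≤ n`. -/
def GPFin (n : ℕ) : Set (ModuleCat.{u} Λ) :=
  {M | StronglyFinitelyPresented Λ M ∧ GProjDimLe Λ n M}

/-- The class `GP_∞^fin` of strongly finitely presented modules of finite Gorenstein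
projective dimension. -/
def GPInfFin : Set (ModuleCat.{u} Λ) :=
  {M | StronglyFinitelyPresented Λ M ∧ ∃ n : ℕ, GProjDimLe Λ n M}

/-- `f : X ⟶ M` is a `C`-precover of `M`. -/
def IsPrecover (C : Set (ModuleCat.{u} Λ)) {X M : ModuleCat.{u} Λ} (f : X ⟶ M) : Prop :=
  X ∈ C ∧ ∀ Y ∈ C, ∀ g : Y ⟶ M, ∃ h : Y ⟶ X, h ≫ f = g

/-- `C` is contravariantly finite: every finitely generated module has a `C`-precover. -/
def ContravariantlyFinite (C : Set (ModuleCat.{u} Λ)) : Prop :=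
  ∀ (M : ModuleCat.{u} Λ), Module.Finite Λ M →
    ∃ (X : ModuleCat.{u} Λ) (f : X ⟶ M), IsPrecover Λ C f

/-- `f : X ⟶ M` is a special `C`-precover of `M`: it is surjective, `X ∈ C` and
`ker f ∈ C^⊥`. -/
def IsSpecialPrecover (C : Set (ModuleCat.{u} Λ)) {X M : ModuleCat.{u} Λ} (f : X ⟶ M) : Prop :=
  X ∈ C ∧ Function.Surjective f ∧ ModuleCat.of Λ (LinearMap.ker f.hom) ∈ rightPerp Λ C

/-- `M` admits a finite filtration with factors isomorphic to members of `C`. -/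
def FinitelyFiltered (C : Set (ModuleCat.{u} Λ)) (M : ModuleCat.{u} Λ) : Prop :=
  ∃ (k : ℕ) (F : ℕ → Submodule Λ M),
    F 0 = ⊥ ∧ F k = ⊤ ∧ (∀ i < k, F i ≤ F (i + 1)) ∧
    ∀ i < k, ∃ N ∈ C,
      Nonempty ((↥(F (i + 1)) ⧸ Submodule.comap (F (i + 1)).subtype (F i)) ≃ₗ[Λ] N)

/-- `add(C)`: direct summands of finite direct sums of members of `C`. -/
def addClass (C : Set (ModuleCat.{u} Λ)) : Set (ModuleCat.{u} Λ) :=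
  {M | ∃ (k : ℕ) (N : Fin k → ModuleCat.{u} Λ), (∀ j, N j ∈ C) ∧
    ∃ (i : M ⟶ ModuleCat.of Λ (∀ j, N j)) (r : ModuleCat.of Λ (∀ j, N j) ⟶ M),
      i ≫ r = 𝟙 M}

/-- `U ⋆ V`: modules which are an extension of a module in `U` by a module in `V`,
i.e. middle terms of short exact sequences `0 → A → M → B → 0` with `A ∈ U`, `B ∈ V`. -/
def starClass (U V : Set (ModuleCat.{u} Λ)) : Set (ModuleCat.{u} Λ) :=
  {M | ∃ (A B : ModuleCat.{u} Λ) (i : A ⟶ M) (p : M ⟶ B), A ∈ U ∧ B ∈ V ∧ IsSES Λ i p}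

/-- `U` is closed under extensions. -/
def ExtensionClosed (U : Set (ModuleCat.{u} Λ)) : Prop :=
  ∀ M ∈ starClass Λ U U, M ∈ U

/-- `C` is syzygy-closed: it contains a syzygy of each of its members (hence, iterating,
all the syzygies of some projective resolution of each of its members). -/
def SyzygyClosed (C : Set (ModuleCat.{u} Λ)) : Prop :=
  ∀ M ∈ C, ∃ K ∈ C, IsSyzygyOf Λ K M

/-- `Add(T)`: direct summands of arbitrary direct sums of copies of `T`. -/
def AddClass (T : ModuleCat.{u} Λ) : Set (ModuleCat.{u} Λ) :=
  {M | ∃ (ι : Type u) (i : M ⟶ ModuleCat.of Λ (ι →₀ T)) (r : ModuleCat.of Λ (ι →₀ T) ⟶ M),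
    i ≫ r = 𝟙 M}

/-- `T` is an `n`-tilting module: `pd T ≤ n`, `Ext^{≥1}(T, T^{(κ)}) = 0` for every
cardinal `κ`, and `Λ` admits a finite coresolution by modules in `Add(T)`. -/
def IsTilting (n : ℕ) (T : ModuleCat.{u} Λ) : Prop :=
  ProjDimLe Λ n T ∧
  (∀ ι : Type u, ExtGe1Zero Λ T (ModuleCat.of Λ (ι →₀ T))) ∧
  ∃ m : ℕ, CoresolDimLe Λ (AddClass Λ T) m (ModuleCat.of Λ Λ)

/-- `Λ` is an Artin algebra: an algebra over some commutative artinian ring `R` which is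
finitely generated as an `R`-module. -/
def IsArtinAlgebra : Prop :=
  ∃ (R : Type u) (_ : CommRing R) (_ : IsArtinianRing R) (_ : Algebra R Λ),
    Module.Finite R Λ

end GorensteinFDC

private lemma statement0_mono {Λ : Type u} [Ring Λ] {M : ModuleCat.{u} Λ}
    (σ : Ordinal.{u}) (F : Ordinal.{u} → Submodule Λ M)
    (hstrict : ∀ α < σ, F α < F (α + 1))
    (hlim : ∀ α ≤ σ, Order.IsSuccLimit α → F α = ⨆ β ∈ Set.Iio α, F β) :
    ∀ γ ≤ σ, ∀ β ≤ γ, F β ≤ F γ := by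
  intro γ
  induction γ using Ordinal.induction with
  | h γ IH =>
    intro hγσ β hβγ
    rcases eq_or_lt_of_le hβγ with rfl | hβγ
    · exact le_rfl
    rcases Ordinal.zero_or_succ_or_isSuccLimit γ with h0 | ⟨δ, rfl⟩ | hl
    · exact absurd hβγ (by simp [h0])
    · rw [← Ordinal.add_one_eq_succ] at hγσ hβγ ⊢
      have hδ : δ < δ + 1 := by
        rw [Ordinal.add_one_eq_succ]; exact Order.lt_succ δ
      have hβδ : β ≤ δ := by
        rwa [Ordinal.add_one_eq_succ, Order.lt_succ_iff] at hβγ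
      exact le_trans (IH δ hδ (le_trans hδ.le hγσ) β hβδ)
        (hstrict δ (lt_of_lt_of_le hδ hγσ)).le
    · rw [hlim γ hγσ hl]
      exact le_iSup₂ (f := fun β (_ : β ∈ Set.Iio γ) => F β) β hβγ

private lemma statement0_aux {Λ : Type u} [Ring Λ] {C : Set (ModuleCat.{u} Λ)}
    (hC : ∀ N ∈ C, Module.FinitePresentation Λ N)
    {M : ModuleCat.{u} Λ} (F : Ordinal.{u} → Submodule Λ M) :
    ∀ σ : Ordinal.{u}, (F σ).FG →
      (∀ α < σ, F α < F (α + 1)) →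
      (∀ α ≤ σ, Order.IsSuccLimit α → F α = ⨆ β ∈ Set.Iio α, F β) →
      (∀ α < σ, ∃ N ∈ C,
        Nonempty ((↥(F (α + 1)) ⧸ Submodule.comap (F (α + 1)).subtype (F α)) ≃ₗ[Λ] ↥N)) →
      σ < Ordinal.omega0 := by
  intro σ
  induction σ using Ordinal.induction with
  | h σ IH =>
    intro hfg hstrict hlim hfactor
    rcases Ordinal.zero_or_succ_or_isSuccLimit σ with h0 | ⟨τ, rfl⟩ | hl
    · simpa [h0] using Ordinal.omega0_pos
    · rw [← Ordinal.add_one_eq_succ] at hfg hstrict hlim hfactor ⊢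
      have hτ : τ < τ + 1 := by
        rw [Ordinal.add_one_eq_succ]; exact Order.lt_succ τ
      obtain ⟨N, hN, ⟨e⟩⟩ := hfactor τ hτ
      haveI := hC N hN
      haveI : Module.Finite Λ ↥(F (τ + 1)) := Module.Finite.iff_fg.mpr hfg
      set K := Submodule.comap (F (τ + 1)).subtype (F τ) with hK
      let f : ↥(F (τ + 1)) →ₗ[Λ] ↥N := e.toLinearMap ∘ₗ K.mkQ
      have hfs : Function.Surjective f :=
        e.surjective.comp (Submodule.mkQ_surjective K)
      have hker : LinearMap.ker f = K := by
        show LinearMap.ker (e.toLinearMap ∘ₗ K.mkQ) = K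
        rw [LinearMap.ker_comp, LinearEquiv.ker, Submodule.comap_bot, Submodule.ker_mkQ]
      have hKfg : K.FG := hker ▸ Module.FinitePresentation.fg_ker f hfs
      have hFτfg : (F τ).FG := by
        have hle : F τ ≤ F (τ + 1) := (hstrict τ hτ).le
        have hmap : Submodule.map (F (τ + 1)).subtype K = F τ := by
          rw [hK, Submodule.map_comap_subtype, inf_eq_right.mpr hle]
        exact hmap ▸ hKfg.map _
      have hτω : τ < Ordinal.omega0 :=
        IH τ hτ hFτfg (fun α hα => hstrict α (hα.trans hτ))
          (fun α hα h => hlim α (hα.trans hτ.le) h)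
          (fun α hα => hfactor α (hα.trans hτ))
      rw [Ordinal.add_one_eq_succ]
      exact Ordinal.isSuccLimit_omega0.succ_lt hτω
    · exfalso
      have hmono := statement0_mono σ F hstrict hlim
      have hFσ := hlim σ le_rfl hl
      have hcomp := (Submodule.fg_iff_compact _).mp hfg
      rw [CompleteLattice.isCompactElement_iff_le_of_directed_sSup_le] at hcomp
      obtain ⟨x, hx, hle⟩ := hcomp (F '' Set.Iio σ)
        ⟨F 0, ⟨0, hl.pos, rfl⟩⟩
        (by
          rintro _ ⟨β, hβ, rfl⟩ _ ⟨γ, hγ, rfl⟩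
          refine ⟨F (max β γ), ⟨max β γ, Set.mem_Iio.mpr (max_lt hβ hγ), rfl⟩, ?_, ?_⟩
          · exact hmono (max β γ) (max_lt hβ hγ).le β (le_max_left β γ)
          · exact hmono (max β γ) (max_lt hβ hγ).le γ (le_max_right β γ))
        (by rw [sSup_image]; exact hFσ.le)
      obtain ⟨β, hβ, rfl⟩ := hx
      have hβ1 : β + 1 ≤ σ := by
        rw [Ordinal.add_one_eq_succ]; exact (hl.succ_lt hβ).le
      exact absurd ((hstrict β hβ).trans_le ((hmono σ le_rfl (β + 1) hβ1).trans hle))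
        (lt_irrefl _)


open GorensteinFDC in
/-- If `{M_α}_{α ≤ σ}` is a strict `C`-filtration of a finitely generated
module `M`, where `C` consists of finitely presented modules, then `σ` is finite. -/
theorem statement0 (Λ : Type u) [Ring Λ] (C : Set (ModuleCat.{u} Λ))
    (hC : ∀ N ∈ C, Module.FinitePresentation Λ N)
    (M : ModuleCat.{u} Λ) (hM : Module.Finite Λ M)
    (σ : Ordinal.{u}) (F : Ordinal.{u} → Submodule Λ M)
    (hbot : F 0 = ⊥) (htop : F σ = ⊤)
    (hstrict : ∀ α < σ, F α < F (α + 1))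
    (hlim : ∀ α ≤ σ, Order.IsSuccLimit α → F α = ⨆ β ∈ Set.Iio α, F β)
    (hfactor : ∀ α < σ, ∃ N ∈ C,
      Nonempty ((↥(F (α + 1)) ⧸ Submodule.comap (F (α + 1)).subtype (F α)) ≃ₗ[Λ] ↥N)) :
    σ < Ordinal.omega0 := by
  refine statement0_aux hC F σ ?_ hstrict hlim hfactor
  rw [htop]
  exact Module.finite_def.mp hM
end

section
/- Let Λ be a ring, T an n-tilting Λ-module, S a strongly Gorenstein projective Λ-module, and set U := T ⊕ S. If (L_U, R_U) is the cotorsion pair with R_U = U^{⊥∞}, then L_U ∩ P_n = ^⊥(T^{⊥∞}), where P_n is the class of left Λ-modules of projective dimension at most n. -/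
open CategoryTheory Function

universe u

namespace GorensteinFDC

variable {Λ : Type u} [Ring Λ]

instance homToLinCoe {M N : ModuleCat.{u} Λ} : CoeOut (M ⟶ N) (M →ₗ[Λ] N) :=
  ⟨fun f => f.hom⟩

instance linToHomCoe {M N : ModuleCat.{u} Λ} : CoeOut (M →ₗ[Λ] N) (M ⟶ N) :=
  ⟨fun f => ModuleCat.ofHom f⟩

section Infra

lemma IsSES.kerEq {A M B : ModuleCat.{u} Λ} {i : A ⟶ M} {p : M ⟶ B} (h : IsSES Λ i p) :
    LinearMap.ker (p : M →ₗ[Λ] B) = LinearMap.range (i : A →ₗ[Λ] M) :=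
  LinearMap.exact_iff.mp h.2.2

lemma IsSES.apply_apply {A M B : ModuleCat.{u} Λ} {i : A ⟶ M} {p : M ⟶ B} (h : IsSES Λ i p)
    (a : A) : p (i a) = 0 := by
  have : i a ∈ LinearMap.ker (p : M →ₗ[Λ] B) := by
    rw [h.kerEq]; exact ⟨a, rfl⟩
  exact this

lemma IsSES.mem_range {A M B : ModuleCat.{u} Λ} {i : A ⟶ M} {p : M ⟶ B} (h : IsSES Λ i p)
    {m : M} (hm : p m = 0) : ∃ a : A, i a = m := (h.2.2 m).mp hm

/-- factor a map through a surjection whose kernel it kills -/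
lemma exists_cofactor {M B N : ModuleCat.{u} Λ} (p : M ⟶ B) (hp : Function.Surjective p)
    (q : M ⟶ N) (hker : ∀ m, p m = 0 → q m = 0) :
    ∃ s : B ⟶ N, ∀ m, s (p m) = q m := by
  let e := (p : M →ₗ[Λ] B).quotKerEquivOfSurjective hp
  refine ⟨((LinearMap.ker (p : M →ₗ[Λ] B)).liftQ (q : M →ₗ[Λ] N)
      (fun m hm => hker m hm)).comp (e.symm.toLinearMap), fun m => ?_⟩
  have h1 : e.symm (p m) = Submodule.Quotient.mk m := by
    apply e.injective
    rw [LinearEquiv.apply_symm_apply]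
    rfl
  show (LinearMap.ker (p : M →ₗ[Λ] B)).liftQ (q : M →ₗ[Λ] N) (fun m hm => hker m hm) (e.symm (p m)) = q m
  rw [h1]
  exact Submodule.liftQ_apply _ _ _

/-- factor a map through an injection containing its range -/
lemma exists_factorKer {A M E : ModuleCat.{u} Λ} (i : A ⟶ M) (hi : Function.Injective i)
    (φ : E ⟶ M) (hmem : ∀ x, ∃ a : A, i a = φ x) :
    ∃ r : E ⟶ A, ∀ x, i (r x) = φ x := by
  let eq := LinearEquiv.ofInjective (i : A →ₗ[Λ] M) hi
  have hm : ∀ x : E, φ x ∈ LinearMap.range (i : A →ₗ[Λ] M) := fun x => hmem x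
  refine ⟨(eq.symm.toLinearMap).comp ((φ : E →ₗ[Λ] M).codRestrict _ hm), fun x => ?_⟩
  show (i : A →ₗ[Λ] M) (eq.symm ⟨φ x, hm x⟩) = φ x
  have : eq (eq.symm ⟨φ x, hm x⟩) = ⟨φ x, hm x⟩ := eq.apply_symm_apply _
  have h2 := congrArg (Subtype.val) this
  exact h2

/-- from a retraction of the injection, get a section of the surjection -/
lemma section_of_retraction {A M B : ModuleCat.{u} Λ} {i : A ⟶ M} {p : M ⟶ B}
    (h : IsSES Λ i p) (r : M ⟶ A) (hr : ∀ a, r (i a) = a) :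
    ∃ s : B ⟶ M, ∀ b, p (s b) = b := by
  have hker : ∀ m, p m = 0 → ((LinearMap.id : M →ₗ[Λ] M) - (i : A →ₗ[Λ] M).comp r.hom) m = 0 := by
    intro m hm
    obtain ⟨a, ha⟩ := h.mem_range hm
    show m - i (r m) = 0
    rw [← ha, hr a]
    abel
  obtain ⟨s, hs⟩ := exists_cofactor p h.2.1 (ModuleCat.ofHom ((LinearMap.id : M →ₗ[Λ] M) - (i : A →ₗ[Λ] M).comp r.hom)) hker
  refine ⟨s, fun b => ?_⟩
  obtain ⟨m, rfl⟩ := h.2.1 b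
  rw [hs m]
  show p (m - i (r m)) = p m
  rw [map_sub, h.apply_apply]
  abel

/-- from a section of the surjection, get a retraction of the injection -/
lemma retraction_of_section {A M B : ModuleCat.{u} Λ} {i : A ⟶ M} {p : M ⟶ B}
    (h : IsSES Λ i p) (s : B ⟶ M) (hs : ∀ b, p (s b) = b) :
    ∃ r : M ⟶ A, ∀ a, r (i a) = a := by
  have hmem : ∀ m : M, ∃ a : A, i a = ((LinearMap.id : M →ₗ[Λ] M) - (s : B →ₗ[Λ] M).comp p.hom) m := by
    intro m
    apply h.mem_range
    show p (m - s (p m)) = 0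
    rw [map_sub, hs]; abel
  obtain ⟨r, hr⟩ := exists_factorKer i h.1 (ModuleCat.ofHom ((LinearMap.id : M →ₗ[Λ] M) - (s : B →ₗ[Λ] M).comp p.hom)) hmem
  refine ⟨r, fun a => ?_⟩
  apply h.1
  rw [hr]
  show i a - s (p (i a)) = i a
  rw [h.apply_apply, map_zero]
  abel

lemma ext1Zero_of_section {A B : ModuleCat.{u} Λ} (E : ModuleCat.{u} Λ) (i : B ⟶ E) (p : E ⟶ A)
    (h : IsSES Λ i p) (s : A ⟶ E) (hs : ∀ a, p (s a) = a) : ∃ s : A ⟶ E, s ≫ p = 𝟙 A :=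
  ⟨s, by ext a; exact hs a⟩

lemma ext1Zero_of_projective {A B : ModuleCat.{u} Λ} (hA : Projective A) : Ext1Zero Λ A B := by
  intro E i p h
  have : Epi p := (ModuleCat.epi_iff_surjective p).mpr h.2.1
  exact ⟨Projective.factorThru (𝟙 A) p, Projective.factorThru_comp _ _⟩

lemma ext1Zero_of_injective {A B : ModuleCat.{u} Λ} (hB : Injective B) : Ext1Zero Λ A B := by
  intro E i p h
  have : Mono i := (ModuleCat.mono_iff_injective i).mpr h.1
  obtain ⟨s, hs⟩ := section_of_retraction h (Injective.factorThru (𝟙 B) i)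
    (fun b => congrFun (congrArg (fun (f : B ⟶ B) => (f : B → B)) (Injective.comp_factorThru (𝟙 B) i)) b)
  exact ⟨s, by ext a; exact hs a⟩

lemma Ext1Zero.congr_right {A B B' : ModuleCat.{u} Λ} (e : B ≃ₗ[Λ] B')
    (h : Ext1Zero Λ A B) : Ext1Zero Λ A B' := by
  intro E i p hses
  apply h E ((i : B' →ₗ[Λ] E).comp (e.toLinearMap)) p
  refine ⟨fun x y hxy => e.injective (hses.1 hxy), hses.2.1, ?_⟩
  intro m
  rw [(hses.2.2 m)]
  constructor
  · rintro ⟨b', rfl⟩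
    refine ⟨e.symm b', ?_⟩
    show i (e (e.symm b')) = i b'
    rw [e.apply_symm_apply]
  · rintro ⟨b, rfl⟩; exact ⟨e b, rfl⟩

end Infra

end GorensteinFDC
namespace GorensteinFDC

variable {Λ : Type u} [Ring Λ]

section Infra2

lemma hom_pt {X Y : ModuleCat.{u} Λ} {f g : X ⟶ Y} (h : f = g) (x : X) : f x = g x := by rw [h]

lemma pullback_ses {A M B N : ModuleCat.{u} Λ} (i : A ⟶ M) (p : M ⟶ B) (h : IsSES Λ i p)
    (g : N ⟶ B) :
    ∃ (P : ModuleCat.{u} Λ) (i' : A ⟶ P) (p' : P ⟶ N) (π : P ⟶ M),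
      IsSES Λ i' p' ∧ (∀ x, p (π x) = g (p' x)) ∧ (∀ a, π (i' a) = i a) := by
  let Pb : Submodule Λ (↥M × ↥N) :=
    LinearMap.ker ((p : M →ₗ[Λ] B).comp (LinearMap.fst Λ ↥M ↥N) -
      (g : N →ₗ[Λ] B).comp (LinearMap.snd Λ ↥M ↥N))
  have hPb : ∀ x : ↥M × ↥N, x ∈ Pb ↔ p x.1 = g x.2 := by
    intro x
    show p x.1 - g x.2 = 0 ↔ _
    exact sub_eq_zero
  refine ⟨ModuleCat.of Λ ↥Pb,
    ModuleCat.ofHom (LinearMap.codRestrict Pb ((LinearMap.inl Λ ↥M ↥N).comp (i : A →ₗ[Λ] M))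
      (fun a => (hPb _).mpr (by show p (i a) = g 0; rw [h.apply_apply, map_zero]))),
    ModuleCat.ofHom ((LinearMap.snd Λ ↥M ↥N).comp Pb.subtype),
    ModuleCat.ofHom ((LinearMap.fst Λ ↥M ↥N).comp Pb.subtype), ⟨?_, ?_, ?_⟩, ?_, ?_⟩
  · intro x y hxy
    apply h.1
    exact congrArg (fun z : ↥Pb => (z : ↥M × ↥N).1) hxy
  · intro nn
    obtain ⟨m, hm⟩ := h.2.1 (g nn)
    exact ⟨⟨(m, nn), (hPb _).mpr hm⟩, rfl⟩
  · rintro ⟨⟨m, nn⟩, hmem⟩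
    constructor
    · intro hx
      have hx2 : nn = 0 := hx
      have hx1 : p m = 0 := by
        rw [(hPb _).mp hmem, hx2, map_zero]
      obtain ⟨a, ha⟩ := h.mem_range hx1
      exact ⟨a, Subtype.ext (Prod.ext ha hx2.symm)⟩
    · rintro ⟨a, ha⟩
      rw [← ha]
      rfl
  · rintro ⟨⟨m, nn⟩, hmem⟩
    exact (hPb _).mp hmem
  · intro a
    rfl

lemma pushout_ses {A E Q B : ModuleCat.{u} Λ} (α : A ⟶ E) (β : E ⟶ Q) (h : IsSES Λ α β)
    (u : A ⟶ B) :
    ∃ (G : ModuleCat.{u} Λ) (ι : B ⟶ G) (q : G ⟶ Q) (j : E ⟶ G),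
      IsSES Λ ι q ∧ (∀ e, q (j e) = β e) ∧ (∀ a, j (α a) = ι (u a)) := by
  let W : Submodule Λ (↥B × ↥E) :=
    LinearMap.range (LinearMap.prod (u : A →ₗ[Λ] B) (-(α : A →ₗ[Λ] E)))
  have hker : W ≤ LinearMap.ker ((β : E →ₗ[Λ] Q).comp (LinearMap.snd Λ ↥B ↥E)) := by
    rintro x ⟨a, rfl⟩
    show β (-(α a)) = 0
    rw [map_neg, h.apply_apply, neg_zero]
  refine ⟨ModuleCat.of Λ ((↥B × ↥E) ⧸ W),
    ModuleCat.ofHom (W.mkQ.comp (LinearMap.inl Λ ↥B ↥E)),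
    ModuleCat.ofHom (W.liftQ ((β : E →ₗ[Λ] Q).comp (LinearMap.snd Λ ↥B ↥E)) hker),
    ModuleCat.ofHom (W.mkQ.comp (LinearMap.inr Λ ↥B ↥E)), ⟨?_, ?_, ?_⟩, ?_, ?_⟩
  · intro x y hxy
    have hW : ((x, 0) : ↥B × ↥E) - (y, 0) ∈ W := (Submodule.Quotient.eq W).mp hxy
    obtain ⟨a, ha⟩ := hW
    have h2 : -(α a) = (0 : ↥E) - 0 := congrArg Prod.snd ha
    have ha0 : a = 0 := by
      apply h.1
      rw [map_zero, ← neg_eq_zero]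
      rw [h2]; abel
    have h1 : u a = x - y := congrArg Prod.fst ha
    rw [ha0, map_zero] at h1
    exact sub_eq_zero.mp h1.symm
  · intro qq
    obtain ⟨e, he⟩ := h.2.1 qq
    exact ⟨Submodule.Quotient.mk (0, e), by show β ((0:↥B), e).2 = qq; exact he⟩
  · intro x
    obtain ⟨⟨b, e⟩, rfl⟩ := W.mkQ_surjective x
    constructor
    · intro hx
      have hbe : β e = 0 := hx
      obtain ⟨a, ha⟩ := h.mem_range hbe
      refine ⟨b + u a, ?_⟩
      show W.mkQ (b + u a, 0) = W.mkQ (b, e)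
      rw [Submodule.mkQ_apply, Submodule.mkQ_apply, Submodule.Quotient.eq]
      refine ⟨a, Prod.ext ?_ ?_⟩
      · show u a = b + u a - b
        abel
      · show -(α a) = 0 - e
        rw [ha]
        abel
    · rintro ⟨b', hb'⟩
      have : W.mkQ (b', 0) = W.mkQ (b, e) := hb'
      rw [Submodule.mkQ_apply, Submodule.mkQ_apply, Submodule.Quotient.eq] at this
      obtain ⟨a, ha⟩ := this
      have h2 : -(α a) = (0 : ↥E) - e := congrArg Prod.snd ha
      show β e = 0
      have : e = α a := by
        have := congrArg Neg.neg h2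
        rw [neg_neg] at this
        rw [this]; abel
      rw [this, h.apply_apply]
  · intro e
    rfl
  · intro a
    show W.mkQ (0, α a) = W.mkQ (u a, 0)
    rw [Submodule.mkQ_apply, Submodule.mkQ_apply, Submodule.Quotient.eq]
    refine ⟨-a, Prod.ext ?_ ?_⟩
    · show u (-a) = 0 - u a
      rw [map_neg]
      abel
    · show -(α (-a)) = α a - 0
      rw [map_neg, neg_neg]
      abel

/-- If `Ext¹(K, A) = 0` then maps `K ⟶ C` lift along surjections with kernel `A`. -/
lemma exists_lift_of_ext1Zero {A B C K : ModuleCat.{u} Λ} (a : A ⟶ B) (b : B ⟶ C)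
    (h : IsSES Λ a b) (hK : Ext1Zero Λ K A) (g : K ⟶ C) :
    ∃ h' : K ⟶ B, ∀ k, b (h' k) = g k := by
  obtain ⟨P, i', p', π, hP, hcomm, _⟩ := pullback_ses a b h g
  obtain ⟨s, hs⟩ := hK P i' p' hP
  refine ⟨(π : P →ₗ[Λ] B).comp (s : K →ₗ[Λ] P), fun k => ?_⟩
  show b (π (s k)) = g k
  rw [hcomm]
  congr 1
  exact hom_pt hs k

/-- If `Ext¹(Q, B) = 0` then maps `A ⟶ B` extend along injections with cokernel `Q`. -/
lemma exists_extend_of_ext1Zero {A E Q B : ModuleCat.{u} Λ} (α : A ⟶ E) (β : E ⟶ Q)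
    (h : IsSES Λ α β) (hQ : Ext1Zero Λ Q B) (u : A ⟶ B) :
    ∃ φ : E ⟶ B, ∀ x, φ (α x) = u x := by
  obtain ⟨G, ι, q, j, hG, hcomm, hj⟩ := pushout_ses α β h u
  obtain ⟨s, hs⟩ := hQ G ι q hG
  obtain ⟨ρ, hρ⟩ := retraction_of_section hG s (fun b => hom_pt hs b)
  refine ⟨(ρ : G →ₗ[Λ] B).comp (j : E →ₗ[Λ] G), fun x => ?_⟩
  show ρ (j (α x)) = u x
  rw [hj, hρ]

lemma ext1Zero_of_retract {A A' B : ModuleCat.{u} Λ} (i₀ : A ⟶ A') (r : A' ⟶ A)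
    (hr : ∀ x, r (i₀ x) = x) (h : Ext1Zero Λ A' B) : Ext1Zero Λ A B := by
  intro E i p hE
  obtain ⟨P, i', p', π, hP, hcomm, _⟩ := pullback_ses i p hE r
  obtain ⟨s', hs'⟩ := h P i' p' hP
  refine ⟨(π : P →ₗ[Λ] E).comp ((s' : A' →ₗ[Λ] P).comp (i₀ : A →ₗ[Λ] A')), ?_⟩
  ext x
  show p (π (s' (i₀ x))) = x
  rw [hcomm]
  have : p' (s' (i₀ x)) = i₀ x := hom_pt hs' (i₀ x)
  rw [this, hr]

lemma Ext1Zero.congr_left {A A' B : ModuleCat.{u} Λ} (e : A ≃ₗ[Λ] A')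
    (h : Ext1Zero Λ A' B) : Ext1Zero Λ A B :=
  ext1Zero_of_retract (e.toLinearMap : A ⟶ A') (e.symm.toLinearMap : A' ⟶ A)
    (fun x => e.symm_apply_apply x) h

lemma ext1Zero_prod {A A' B : ModuleCat.{u} Λ} (h : Ext1Zero Λ A B) (h' : Ext1Zero Λ A' B) :
    Ext1Zero Λ (ModuleCat.of Λ (↥A × ↥A')) B := by
  intro E i p hE
  obtain ⟨σ₁, hσ₁⟩ := exists_lift_of_ext1Zero i p hE h
    (ModuleCat.ofHom (LinearMap.inl Λ ↥A ↥A' : A →ₗ[Λ] ↥A × ↥A'))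
  obtain ⟨σ₂, hσ₂⟩ := exists_lift_of_ext1Zero i p hE h'
    (ModuleCat.ofHom (LinearMap.inr Λ ↥A ↥A' : A' →ₗ[Λ] ↥A × ↥A'))
  refine ⟨ModuleCat.ofHom ((σ₁ : A →ₗ[Λ] E).comp (LinearMap.fst Λ ↥A ↥A') +
    (σ₂ : A' →ₗ[Λ] E).comp (LinearMap.snd Λ ↥A ↥A')), ?_⟩
  refine ModuleCat.hom_ext (LinearMap.ext fun x => ?_)
  show p (σ₁ x.1 + σ₂ x.2) = x
  rw [map_add, hσ₁, hσ₂]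
  apply Prod.ext
  · show x.1 + 0 = x.1
    abel
  · show 0 + x.2 = x.2
    abel

lemma ext1Zero_finsupp {A B : ModuleCat.{u} Λ} (ι : Type u) (h : Ext1Zero Λ A B) :
    Ext1Zero Λ (ModuleCat.of Λ (ι →₀ ↥A)) B := by
  intro E i p hE
  have key : ∀ k : ι, ∃ σ : A ⟶ E, ∀ x, p (σ x) = Finsupp.single k x :=
    fun k => exists_lift_of_ext1Zero i p hE h (ModuleCat.ofHom (Finsupp.lsingle k : A →ₗ[Λ] (ι →₀ ↥A)))
  choose σ hσ using key
  refine ⟨ModuleCat.ofHom (Finsupp.lsum ℕ (fun k => (σ k : A →ₗ[Λ] E))), ?_⟩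
  have : (p : E →ₗ[Λ] ModuleCat.of Λ (ι →₀ ↥A)).comp (Finsupp.lsum ℕ (fun k => (σ k : A →ₗ[Λ] E)))
      = LinearMap.id := by
    apply Finsupp.lhom_ext'
    intro k
    refine LinearMap.ext fun x => ?_
    show p ((Finsupp.lsum ℕ (fun k => (σ k : A →ₗ[Λ] E))) (Finsupp.single k x)) = Finsupp.single k x
    rw [Finsupp.lsum_single]
    exact hσ k x
  refine ModuleCat.hom_ext (LinearMap.ext fun x => ?_)
  exact LinearMap.congr_fun this x

end Infra2

end GorensteinFDC
namespace GorensteinFDC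

variable {Λ : Type u} [Ring Λ]

section Chase

/-- LES chase: `Ext¹(X,T₀) = 0` and `Ext¹(ΩX, Y₁) = 0` imply `Ext¹(X, Y) = 0`,
where `0 → Y₁ → T₀ → Y → 0` and `0 → ΩX → P → X → 0` with `P` projective. -/
lemma chase_main {Y₁ T₀ Y K P X : ModuleCat.{u} Λ}
    (a : Y₁ ⟶ T₀) (t : T₀ ⟶ Y) (hses1 : IsSES Λ a t)
    (ι : K ⟶ P) (π : P ⟶ X) (hses2 : IsSES Λ ι π) (hP : Projective P)
    (E1 : Ext1Zero Λ X T₀) (E2 : Ext1Zero Λ K Y₁) : Ext1Zero Λ X Y := by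
  intro E α β hE
  haveI : Epi β := (ModuleCat.epi_iff_surjective β).mpr hE.2.1
  let g : P ⟶ E := Projective.factorThru π β
  have hg : ∀ x, β (g x) = π x := fun x => hom_pt (Projective.factorThru_comp π β) x
  have hmem : ∀ k : K, ∃ y : Y, α y = ((g : P →ₗ[Λ] E).comp (ι : K →ₗ[Λ] P)) k := by
    intro k
    apply hE.mem_range
    show β (g (ι k)) = 0
    rw [hg, hses2.apply_apply]
  obtain ⟨g', hg'0⟩ := exists_factorKer α hE.1 (ModuleCat.ofHom ((g : P →ₗ[Λ] E).comp (ι : K →ₗ[Λ] P))) hmem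
  have hg' : ∀ k, α (g' k) = g (ι k) := fun k => hg'0 k
  obtain ⟨h, hh⟩ := exists_lift_of_ext1Zero a t hses1 E2 g'
  obtain ⟨H, hH⟩ := exists_extend_of_ext1Zero ι π hses2 E1 h
  let c : P ⟶ E := ModuleCat.ofHom ((g : P →ₗ[Λ] E) - (α : Y →ₗ[Λ] E).comp ((t : T₀ →ₗ[Λ] Y).comp (H : P →ₗ[Λ] T₀)))
  have hc0 : ∀ m, π m = 0 → c m = 0 := by
    intro m hm
    obtain ⟨k, rfl⟩ := hses2.mem_range hm
    show g (ι k) - α (t (H (ι k))) = 0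
    rw [hH, hh, hg' k]
    abel
  obtain ⟨s, hs⟩ := exists_cofactor π hses2.2.1 c hc0
  refine ⟨s, ?_⟩
  ext x
  obtain ⟨m, rfl⟩ := hses2.2.1 x
  show β (s (π m)) = π m
  rw [hs]
  show β (g m - α (t (H m))) = π m
  rw [map_sub, hg]
  have : β (α (t (H m))) = 0 := hE.apply_apply _
  rw [this]
  abel

/-- LES chase: `Ext¹(M, C) = 0` and `Ext¹(K, B) = 0` imply `Ext¹(K, A) = 0`, where
`0 → A → B → C → 0` and `0 → K → P → M → 0` with `P` projective. -/
lemma chase_four {A B C K P M : ModuleCat.{u} Λ}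
    (a : A ⟶ B) (b : B ⟶ C) (hses1 : IsSES Λ a b)
    (ι : K ⟶ P) (π : P ⟶ M) (hses2 : IsSES Λ ι π) (hP : Projective P)
    (E1 : Ext1Zero Λ M C) (E2 : Ext1Zero Λ K B) : Ext1Zero Λ K A := by
  intro E α β hE
  obtain ⟨φ, hφ⟩ := exists_extend_of_ext1Zero α β hE E2 a
  have hker : ∀ x, β x = 0 → ((b : B →ₗ[Λ] C).comp (φ : E →ₗ[Λ] B)) x = 0 := by
    intro x hx
    obtain ⟨y, rfl⟩ := hE.mem_range hx
    show b (φ (α y)) = 0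
    rw [hφ, hses1.apply_apply]
  obtain ⟨ψ, hψ0⟩ := exists_cofactor β hE.2.1 (ModuleCat.ofHom ((b : B →ₗ[Λ] C).comp (φ : E →ₗ[Λ] B))) hker
  have hψ : ∀ m, ψ (β m) = b (φ m) := fun m => hψ0 m
  obtain ⟨Ψ, hΨ⟩ := exists_extend_of_ext1Zero ι π hses2 E1 ψ
  haveI : Epi b := (ModuleCat.epi_iff_surjective b).mpr hses1.2.1
  let Θ : P ⟶ B := Projective.factorThru Ψ b
  have hΘ : ∀ x, b (Θ x) = Ψ x := fun x => hom_pt (Projective.factorThru_comp Ψ b) x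
  let φ' : E ⟶ B := ModuleCat.ofHom ((φ : E →ₗ[Λ] B) -
    ((Θ : P →ₗ[Λ] B).comp (ι : K →ₗ[Λ] P)).comp (β : E →ₗ[Λ] K))
  have hmem : ∀ x : E, ∃ z : A, a z = φ' x := by
    intro x
    apply hses1.mem_range
    show b (φ x - Θ (ι (β x))) = 0
    rw [map_sub, hΘ, hΨ, hψ]
    abel
  obtain ⟨r, hr⟩ := exists_factorKer a hses1.1 φ' hmem
  have hrα : ∀ y, r (α y) = y := by
    intro y
    apply hses1.1
    rw [hr]
    show φ (α y) - Θ (ι (β (α y))) = a y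
    rw [hφ, hE.apply_apply, map_zero, map_zero]
    abel
  obtain ⟨s, hs⟩ := section_of_retraction hE r hrα
  exact ⟨s, by ext x; exact hs x⟩

/-- LES chase: `Hom(K,B) → Hom(K,C)` surjective and `Ext¹(K, B) = 0` imply `Ext¹(K, A) = 0`,
where `0 → A → B → C → 0`. -/
lemma chase_homsurj {A B C K : ModuleCat.{u} Λ}
    (a : A ⟶ B) (b : B ⟶ C) (hses1 : IsSES Λ a b)
    (hsurj : ∀ ψ : K ⟶ C, ∃ χ : K ⟶ B, ∀ k, b (χ k) = ψ k)
    (E2 : Ext1Zero Λ K B) : Ext1Zero Λ K A := by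
  intro E α β hE
  obtain ⟨φ, hφ⟩ := exists_extend_of_ext1Zero α β hE E2 a
  have hker : ∀ x, β x = 0 → ((b : B →ₗ[Λ] C).comp (φ : E →ₗ[Λ] B)) x = 0 := by
    intro x hx
    obtain ⟨y, rfl⟩ := hE.mem_range hx
    show b (φ (α y)) = 0
    rw [hφ, hses1.apply_apply]
  obtain ⟨ψ, hψ0⟩ := exists_cofactor β hE.2.1 (ModuleCat.ofHom ((b : B →ₗ[Λ] C).comp (φ : E →ₗ[Λ] B))) hker
  have hψ : ∀ m, ψ (β m) = b (φ m) := fun m => hψ0 m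
  obtain ⟨χ, hχ⟩ := hsurj ψ
  let φ' : E ⟶ B := ModuleCat.ofHom ((φ : E →ₗ[Λ] B) - (χ : K →ₗ[Λ] B).comp (β : E →ₗ[Λ] K))
  have hmem : ∀ x : E, ∃ z : A, a z = φ' x := by
    intro x
    apply hses1.mem_range
    show b (φ x - χ (β x)) = 0
    rw [map_sub, hχ, hψ]
    abel
  obtain ⟨r, hr⟩ := exists_factorKer a hses1.1 φ' hmem
  have hrα : ∀ y, r (α y) = y := by
    intro y
    apply hses1.1
    rw [hr]
    show φ (α y) - χ (β (α y)) = a y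
    rw [hφ, hE.apply_apply, map_zero]
    abel
  obtain ⟨s, hs⟩ := section_of_retraction hE r hrα
  exact ⟨s, by ext x; exact hs x⟩

/-- LES chase: `Ext¹(B, Y) = 0` and `Ext¹(ΩC, Y) = 0` imply `Ext¹(A, Y) = 0`, where
`0 → A → B → C → 0` and `0 → ΩC → P → C → 0` with `P` projective. -/
lemma chase_two {A B C K P Y : ModuleCat.{u} Λ}
    (a : A ⟶ B) (b : B ⟶ C) (hses1 : IsSES Λ a b)
    (ι : K ⟶ P) (π : P ⟶ C) (hses2 : IsSES Λ ι π) (hP : Projective P)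
    (E1 : Ext1Zero Λ B Y) (E2 : Ext1Zero Λ K Y) : Ext1Zero Λ A Y := by
  intro E α β hE
  -- lift π along b
  haveI : Epi b := (ModuleCat.epi_iff_surjective b).mpr hses1.2.1
  let q : P ⟶ B := Projective.factorThru π b
  have hq : ∀ x, b (q x) = π x := fun x => hom_pt (Projective.factorThru_comp π b) x
  have hmem : ∀ k : K, ∃ z : A, a z = ((q : P →ₗ[Λ] B).comp (ι : K →ₗ[Λ] P)) k := by
    intro k
    apply hses1.mem_range
    show b (q (ι k)) = 0
    rw [hq, hses2.apply_apply]
  obtain ⟨q', hq'0⟩ := exists_factorKer a hses1.1 (ModuleCat.ofHom ((q : P →ₗ[Λ] B).comp (ι : K →ₗ[Λ] P))) hmem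
  have hq' : ∀ k, a (q' k) = q (ι k) := fun k => hq'0 k
  obtain ⟨h, hh⟩ := exists_lift_of_ext1Zero α β hE E2 q'
  -- construct G := (E × P) ⧸ W,  W = {(h k, -ι k)}
  let W : Submodule Λ (↥E × ↥P) :=
    LinearMap.range (LinearMap.prod (h : K →ₗ[Λ] E) (-(ι : K →ₗ[Λ] P)))
  let jE : E →ₗ[Λ] (↥E × ↥P) ⧸ W := W.mkQ.comp (LinearMap.inl Λ ↥E ↥P)
  let ιG : Y →ₗ[Λ] (↥E × ↥P) ⧸ W := jE.comp (α : Y →ₗ[Λ] E)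
  have hkerq : W ≤ LinearMap.ker
      (((a : A →ₗ[Λ] B).comp (β : E →ₗ[Λ] A)).comp (LinearMap.fst Λ ↥E ↥P) +
        (q : P →ₗ[Λ] B).comp (LinearMap.snd Λ ↥E ↥P)) := by
    rintro x ⟨k, rfl⟩
    show a (β (h k)) + q (-(ι k)) = 0
    rw [hh, hq' k, map_neg]
    abel
  let qG : ((↥E × ↥P) ⧸ W) →ₗ[Λ] B := W.liftQ _ hkerq
  let G : ModuleCat.{u} Λ := ModuleCat.of Λ ((↥E × ↥P) ⧸ W)
  let ιG' : Y ⟶ G := ModuleCat.ofHom ιG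
  let qG' : G ⟶ B := ModuleCat.ofHom qG
  have hses3 : IsSES Λ ιG' qG' := by
    refine ⟨?_, ?_, ?_⟩
    · intro y y' hyy
      have hW : ((α y, 0) : ↥E × ↥P) - (α y', 0) ∈ W := (Submodule.Quotient.eq W).mp hyy
      obtain ⟨k, hk⟩ := hW
      have h2 : -(ι k) = (0 : ↥P) - 0 := congrArg Prod.snd hk
      have hk0 : k = 0 := by
        apply hses2.1
        rw [map_zero, ← neg_eq_zero, h2]
        abel
      have h1 : h k = α y - α y' := congrArg Prod.fst hk
      rw [hk0, map_zero] at h1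
      have := sub_eq_zero.mp h1.symm
      exact hE.1 this
    · intro x
      obtain ⟨e', he'⟩ := hses2.2.1 (b x)
      have : b (x - q e') = 0 := by rw [map_sub, hq, he']; abel
      obtain ⟨z, hz⟩ := hses1.mem_range this
      obtain ⟨e, he⟩ := hE.2.1 z
      refine ⟨Submodule.Quotient.mk (e, e'), ?_⟩
      show a (β e) + q e' = x
      rw [he, hz]
      abel
    · intro x
      obtain ⟨⟨e, pp⟩, rfl⟩ := W.mkQ_surjective x
      constructor
      · intro hx
        have hx' : a (β e) + q pp = 0 := hx
        -- q pp ∈ range a, so π pp = b (q pp) = 0, pp = ι k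
        have hπ : π pp = 0 := by
          rw [← hq]
          have : q pp = -(a (β e)) := by
            rw [eq_neg_iff_add_eq_zero, add_comm]
            exact hx'
          rw [this, map_neg, hses1.apply_apply, neg_zero]
        obtain ⟨k, rfl⟩ := hses2.mem_range hπ
        -- then a β e = -q ι k = -a q' k, so β (e + h k) = 0, e + h k = α y
        have hbe : β e = -(q' k) := by
          apply hses1.1
          rw [map_neg, hq' k]
          exact (by rw [eq_neg_iff_add_eq_zero]; exact hx' : a (β e) = -(q (ι k)))
        have : β (e + h k) = 0 := by
          rw [map_add, hh, hbe]
          abel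
        obtain ⟨y, hy⟩ := hE.mem_range this
        refine ⟨y, ?_⟩
        show W.mkQ (α y, 0) = W.mkQ (e, ι k)
        rw [Submodule.mkQ_apply, Submodule.mkQ_apply, Submodule.Quotient.eq]
        refine ⟨k, Prod.ext ?_ ?_⟩
        · show h k = α y - e
          rw [hy]
          abel
        · show -(ι k) = 0 - ι k
          abel
      · rintro ⟨y, hy⟩
        have : W.mkQ (α y, 0) = W.mkQ (e, pp) := hy
        rw [Submodule.mkQ_apply, Submodule.mkQ_apply, Submodule.Quotient.eq] at this
        obtain ⟨k, hk⟩ := this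
        have h1 : h k = α y - e := congrArg Prod.fst hk
        have h2 : -(ι k) = (0 : ↥P) - pp := congrArg Prod.snd hk
        have hpp : pp = ι k := by
          have := congrArg Neg.neg h2
          rw [neg_neg] at this
          rw [this]
          abel
        have he2 : e = α y - h k := by
          rw [h1]
          abel
        show a (β e) + q pp = 0
        rw [he2, map_sub, hE.apply_apply, zero_sub, map_neg, hh, hq' k, hpp]
        abel
  obtain ⟨sG, hsG⟩ := E1 _ _ _ hses3
  obtain ⟨ρ, hρ⟩ := retraction_of_section hses3 sG (fun x => hom_pt hsG x)
  have hrα : ∀ y, ((ρ : _ →ₗ[Λ] Y).comp jE) (α y) = y := by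
    intro y
    exact hρ y
  obtain ⟨s, hs⟩ := section_of_retraction hE (ModuleCat.ofHom ((ρ : _ →ₗ[Λ] Y).comp jE)) hrα
  exact ⟨s, by ext x; exact hs x⟩

end Chase

end GorensteinFDC
namespace GorensteinFDC

variable {Λ : Type u} [Ring Λ]

section Syzygy

/-- linear equivalence out of a categorical isomorphism -/
def isoToEquiv {A A' : ModuleCat.{u} Λ} (e : A ≅ A') : (↥A ≃ₗ[Λ] ↥A') :=
  LinearEquiv.ofLinear (e.hom : A →ₗ[Λ] A') (e.inv : A' →ₗ[Λ] A) (ModuleCat.hom_ext_iff.mp e.inv_hom_id) (ModuleCat.hom_ext_iff.mp e.hom_inv_id)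

noncomputable def freeCover (M : ModuleCat.{u} Λ) : ModuleCat.{u} Λ :=
  ModuleCat.of Λ (↥M →₀ Λ)

noncomputable def freeCoverMap (M : ModuleCat.{u} Λ) : freeCover M ⟶ M :=
  ModuleCat.ofHom (Finsupp.linearCombination Λ (_root_.id : ↥M → ↥M))

lemma freeCover_projective (M : ModuleCat.{u} Λ) : Projective (freeCover M) :=
  ModuleCat.projective_of_free (Finsupp.basisSingleOne (R := Λ) (ι := ↥M))

lemma freeCoverMap_surjective (M : ModuleCat.{u} Λ) : Function.Surjective (freeCoverMap M) := by
  intro m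
  refine ⟨Finsupp.single m 1, ?_⟩
  show Finsupp.linearCombination Λ (_root_.id : ↥M → ↥M) (Finsupp.single m 1) = m
  rw [Finsupp.linearCombination_single, one_smul]
  rfl

noncomputable def canOmega (M : ModuleCat.{u} Λ) : ModuleCat.{u} Λ :=
  ModuleCat.of Λ ↥(LinearMap.ker (freeCoverMap M : freeCover M →ₗ[Λ] M))

noncomputable def canOmegaIncl (M : ModuleCat.{u} Λ) : canOmega M ⟶ freeCover M :=
  ModuleCat.ofHom (LinearMap.ker (freeCoverMap M : freeCover M →ₗ[Λ] M)).subtype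

lemma canOmega_ses (M : ModuleCat.{u} Λ) : IsSES Λ (canOmegaIncl M) (freeCoverMap M) := by
  refine ⟨Subtype.val_injective, freeCoverMap_surjective M, ?_⟩
  intro x
  constructor
  · intro hx
    exact ⟨⟨x, hx⟩, rfl⟩
  · rintro ⟨⟨y, hy⟩, rfl⟩
    exact hy

lemma canOmega_isSyzygyOf (M : ModuleCat.{u} Λ) : IsSyzygyOf Λ (canOmega M) M :=
  ⟨freeCover M, canOmegaIncl M, freeCoverMap M, freeCover_projective M, canOmega_ses M⟩

noncomputable def canSyz (n : ℕ) (M : ModuleCat.{u} Λ) : ModuleCat.{u} Λ :=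
  canOmega^[n] M

lemma canSyz_succ (n : ℕ) (M : ModuleCat.{u} Λ) :
    canSyz (n + 1) M = canOmega (canSyz n M) := Function.iterate_succ_apply' canOmega n M

lemma canSyz_succ' (n : ℕ) (M : ModuleCat.{u} Λ) :
    canSyz (n + 1) M = canSyz n (canOmega M) := Function.iterate_succ_apply canOmega n M

lemma canSyz_isNthSyzygyOf (n : ℕ) (M : ModuleCat.{u} Λ) :
    IsNthSyzygyOf Λ n (canSyz n M) M := by
  induction n with
  | zero => exact ⟨Iso.refl M⟩
  | succ n ih =>
    refine ⟨canSyz n M, ih, ?_⟩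
    rw [canSyz_succ]
    exact canOmega_isSyzygyOf (canSyz n M)

lemma isSyzygyOf_congr_left {K K' L : ModuleCat.{u} Λ} (e : ↥K' ≃ₗ[Λ] ↥K)
    (h : IsSyzygyOf Λ K L) : IsSyzygyOf Λ K' L := by
  obtain ⟨P, i, p, hP, hses⟩ := h
  refine ⟨P, (i : K →ₗ[Λ] P).comp (e : ↥K' →ₗ[Λ] ↥K), p, hP, ⟨?_, hses.2.1, ?_⟩⟩
  · intro x y hxy
    exact e.injective (hses.1 hxy)
  · intro x
    rw [hses.2.2 x]
    constructor
    · rintro ⟨k, rfl⟩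
      exact ⟨e.symm k, by show i (e (e.symm k)) = i k; rw [e.apply_symm_apply]⟩
    · rintro ⟨k', rfl⟩
      exact ⟨e k', rfl⟩

lemma isNthSyzygyOf_congr_left {n : ℕ} {K K' A : ModuleCat.{u} Λ} (e : ↥K' ≃ₗ[Λ] ↥K)
    (h : IsNthSyzygyOf Λ n K A) : IsNthSyzygyOf Λ n K' A := by
  cases n with
  | zero =>
    obtain ⟨e0⟩ := h
    exact ⟨(e.toModuleIso).trans e0⟩
  | succ n =>
    obtain ⟨L, hL, hKL⟩ := h
    exact ⟨L, hL, isSyzygyOf_congr_left e hKL⟩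

lemma isNthSyzygyOf_congr_right {n : ℕ} {K A A' : ModuleCat.{u} Λ} (e : ↥A ≃ₗ[Λ] ↥A')
    (h : IsNthSyzygyOf Λ n K A) : IsNthSyzygyOf Λ n K A' := by
  induction n generalizing K with
  | zero =>
    obtain ⟨e0⟩ := h
    exact ⟨e0.trans e.toModuleIso⟩
  | succ n ih =>
    obtain ⟨L, hL, hKL⟩ := h
    exact ⟨L, ih hL, hKL⟩

lemma isNthSyzygyOf_comp {a b : ℕ} {A L K : ModuleCat.{u} Λ}
    (hL : IsNthSyzygyOf Λ a L A) (hK : IsNthSyzygyOf Λ b K L) :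
    IsNthSyzygyOf Λ (a + b) K A := by
  induction b generalizing K with
  | zero =>
    obtain ⟨e0⟩ := hK
    exact isNthSyzygyOf_congr_left (isoToEquiv e0) hL
  | succ b ih =>
    obtain ⟨L', hL', hKL'⟩ := hK
    exact ⟨L', ih hL', hKL'⟩

/-- product of two linear equivalences, for a noncommutative base ring -/
def prodEquiv {M N M' N' : Type u} [AddCommGroup M] [Module Λ M] [AddCommGroup N] [Module Λ N]
    [AddCommGroup M'] [Module Λ M'] [AddCommGroup N'] [Module Λ N']
    (e : M ≃ₗ[Λ] N) (e' : M' ≃ₗ[Λ] N') : (M × M') ≃ₗ[Λ] (N × N') :=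
  LinearEquiv.ofLinear ((e.toLinearMap).prodMap e'.toLinearMap)
    ((e.symm.toLinearMap).prodMap e'.symm.toLinearMap)
    (by
      apply LinearMap.ext
      intro x
      exact Prod.ext (e.apply_symm_apply x.1) (e'.apply_symm_apply x.2))
    (by
      apply LinearMap.ext
      intro x
      exact Prod.ext (e.symm_apply_apply x.1) (e'.symm_apply_apply x.2))

lemma prod_ses {A M B A' M' B' : ModuleCat.{u} Λ} {i : A ⟶ M} {p : M ⟶ B}
    {i' : A' ⟶ M'} {p' : M' ⟶ B'} (h : IsSES Λ i p) (h' : IsSES Λ i' p') :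
    IsSES Λ (ModuleCat.ofHom ((i : A →ₗ[Λ] M).prodMap (i' : A' →ₗ[Λ] M')))
      (ModuleCat.ofHom ((p : M →ₗ[Λ] B).prodMap (p' : M' →ₗ[Λ] B'))) := by
  refine ⟨?_, ?_, ?_⟩
  · intro x y hxy
    have h1 : i x.1 = i y.1 := congrArg Prod.fst hxy
    have h2 : i' x.2 = i' y.2 := congrArg Prod.snd hxy
    exact Prod.ext (h.1 h1) (h'.1 h2)
  · intro x
    obtain ⟨m, hm⟩ := h.2.1 x.1
    obtain ⟨m', hm'⟩ := h'.2.1 x.2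
    exact ⟨(m, m'), Prod.ext hm hm'⟩
  · intro x
    constructor
    · intro hx
      have h1 : p x.1 = 0 := congrArg Prod.fst hx
      have h2 : p' x.2 = 0 := congrArg Prod.snd hx
      obtain ⟨a, ha⟩ := h.mem_range h1
      obtain ⟨a', ha'⟩ := h'.mem_range h2
      exact ⟨(a, a'), Prod.ext ha ha'⟩
    · rintro ⟨⟨a, a'⟩, rfl⟩
      exact Prod.ext (h.apply_apply a) (h'.apply_apply a')

lemma projective_prod {P P' : ModuleCat.{u} Λ} (hP : Projective P) (hP' : Projective P') :
    Projective (ModuleCat.of Λ (↥P × ↥P')) := by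
  haveI h1 : Module.Projective Λ ↥P := (IsProjective.iff_projective _).mpr hP
  haveI h2 : Module.Projective Λ ↥P' := (IsProjective.iff_projective _).mpr hP'
  exact (IsProjective.iff_projective _).mp inferInstance

lemma isNthSyzygyOf_prod {n : ℕ} {K A K' A' : ModuleCat.{u} Λ}
    (h : IsNthSyzygyOf Λ n K A) (h' : IsNthSyzygyOf Λ n K' A') :
    IsNthSyzygyOf Λ n (ModuleCat.of Λ (↥K × ↥K')) (ModuleCat.of Λ (↥A × ↥A')) := by
  induction n generalizing K K' with
  | zero =>
    obtain ⟨e⟩ := h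
    obtain ⟨e'⟩ := h'
    exact ⟨(prodEquiv (isoToEquiv e) (isoToEquiv e')).toModuleIso⟩
  | succ n ih =>
    obtain ⟨L, hL, P, i, p, hP, hses⟩ := h
    obtain ⟨L', hL', P', i', p', hP', hses'⟩ := h'
    exact ⟨ModuleCat.of Λ (↥L × ↥L'), ih hL hL',
      ModuleCat.of Λ (↥P × ↥P'), _, _, projective_prod hP hP', prod_ses hses hses'⟩

lemma projective_finsupp (ι : Type u) (M : ModuleCat.{u} Λ) (h : Projective M) :
    Projective (ModuleCat.of Λ (ι →₀ ↥M)) := by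
  constructor
  intro E X f e he
  have key : ∀ i : ι, ∃ g : M ⟶ E, g ≫ e = ModuleCat.ofHom (Finsupp.lsingle i : ↥M →ₗ[Λ] (ι →₀ ↥M)) ≫ f :=
    fun i => ⟨Projective.factorThru _ e, Projective.factorThru_comp _ _⟩
  choose g hg using key
  refine ⟨ModuleCat.ofHom (Finsupp.lsum ℕ (fun i => (g i : ↥M →ₗ[Λ] ↥E))), ?_⟩
  refine ModuleCat.hom_ext ?_
  apply Finsupp.lhom_ext'
  intro i
  ext m
  have := hom_pt (hg i) m
  simp only [LinearMap.coe_comp, Function.comp_apply] at this ⊢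
  show e ((Finsupp.lsum ℕ fun i => (g i : ↥M →ₗ[Λ] ↥E)) (Finsupp.single i m)) = _
  rw [Finsupp.lsum_single]
  exact this

lemma finsupp_ses (ι : Type u) {A M B : ModuleCat.{u} Λ} {i : A ⟶ M} {p : M ⟶ B}
    (h : IsSES Λ i p) :
    IsSES Λ (ModuleCat.ofHom (Finsupp.mapRange.linearMap (α := ι) (i : A →ₗ[Λ] M)))
      (ModuleCat.ofHom (Finsupp.mapRange.linearMap (α := ι) (p : M →ₗ[Λ] B))) := by
  classical
  have hinj : Function.Injective
      (Finsupp.mapRange.linearMap (α := ι) (i : A →ₗ[Λ] M)) := by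
    intro x y hxy
    ext j
    apply h.1
    have := congrArg (fun z : ι →₀ ↥M => z j) hxy
    simpa [Finsupp.mapRange.linearMap_apply, Finsupp.mapRange_apply] using this
  have hsurj : Function.Surjective
      (Finsupp.mapRange.linearMap (α := ι) (p : M →ₗ[Λ] B)) := by
    intro y
    let g : ↥B → ↥M := fun b => if b = 0 then 0 else Function.surjInv h.2.1 b
    have hg0 : g 0 = 0 := by simp [g]
    refine ⟨Finsupp.mapRange g hg0 y, ?_⟩
    ext j
    show p (Finsupp.mapRange g hg0 y j) = y j
    rw [Finsupp.mapRange_apply]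
    by_cases hyj : y j = 0
    · simp [g, hyj]
    · simp only [g, if_neg hyj]
      exact Function.surjInv_eq h.2.1 (y j)
  have hexact : Function.Exact
      (Finsupp.mapRange.linearMap (α := ι) (i : A →ₗ[Λ] M))
      (Finsupp.mapRange.linearMap (α := ι) (p : M →ₗ[Λ] B)) := by
    intro y
    constructor
    · intro hy
      have hjy : ∀ j, ∃ a : ↥A, i a = y j := by
        intro j
        apply h.mem_range
        have := congrArg (fun z : ι →₀ ↥B => z j) hy
        simpa [Finsupp.mapRange_apply] using this
      let g : ↥M → ↥A := fun m => if hm : ∃ a : ↥A, i a = m then hm.choose else 0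
      have hg0 : g 0 = 0 := by
        have h0 : ∃ a : ↥A, i a = (0 : ↥M) := ⟨0, map_zero _⟩
        simp only [g, dif_pos h0]
        apply h.1
        rw [h0.choose_spec, map_zero]
      refine ⟨Finsupp.mapRange g hg0 y, ?_⟩
      ext j
      show i (Finsupp.mapRange g hg0 y j) = y j
      rw [Finsupp.mapRange_apply]
      simp only [g, dif_pos (hjy j)]
      exact (hjy j).choose_spec
    · rintro ⟨x, rfl⟩
      ext j
      show p ((Finsupp.mapRange.linearMap (α := ι) (i : A →ₗ[Λ] M) x) j) = 0
      rw [Finsupp.mapRange.linearMap_apply, Finsupp.mapRange_apply, h.apply_apply]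
  exact ⟨hinj, hsurj, hexact⟩

lemma isNthSyzygyOf_finsupp (ι : Type u) {n : ℕ} {K A : ModuleCat.{u} Λ}
    (h : IsNthSyzygyOf Λ n K A) :
    IsNthSyzygyOf Λ n (ModuleCat.of Λ (ι →₀ ↥K)) (ModuleCat.of Λ (ι →₀ ↥A)) := by
  induction n generalizing K with
  | zero =>
    obtain ⟨e⟩ := h
    exact ⟨(Finsupp.mapRange.linearEquiv (isoToEquiv e)).toModuleIso⟩
  | succ n ih =>
    obtain ⟨L, hL, P, i, p, hP, hses⟩ := h
    exact ⟨ModuleCat.of Λ (ι →₀ ↥L), ih hL, ModuleCat.of Λ (ι →₀ ↥P), _, _,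
      projective_finsupp ι P hP, finsupp_ses ι hses⟩

end Syzygy

end GorensteinFDC
namespace GorensteinFDC

variable {Λ : Type u} [Ring Λ]

section Schanuel

lemma split_ses_equiv {A M B : ModuleCat.{u} Λ} {i : A ⟶ M} {p : M ⟶ B} (h : IsSES Λ i p)
    (s : B ⟶ M) (hs : ∀ b, p (s b) = b) : Nonempty (↥M ≃ₗ[Λ] (↥A × ↥B)) := by
  have hmem : ∀ m : M, ∃ a : A,
      i a = ((LinearMap.id : M →ₗ[Λ] M) - (s : B →ₗ[Λ] M).comp (p : M →ₗ[Λ] B)) m := by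
    intro m
    apply h.mem_range
    show p (m - s (p m)) = 0
    rw [map_sub, hs]
    abel
  obtain ⟨r, hr0⟩ := exists_factorKer i h.1
    (ModuleCat.ofHom ((LinearMap.id : M →ₗ[Λ] M) - (s : B →ₗ[Λ] M).comp (p : M →ₗ[Λ] B))) hmem
  have hr : ∀ m : M, i (r m) = m - s (p m) := fun m => hr0 m
  have hri : ∀ a : A, r (i a) = a := by
    intro a
    apply h.1
    rw [hr]
    rw [h.apply_apply, map_zero]
    abel
  refine ⟨LinearEquiv.ofLinear ((r : M →ₗ[Λ] A).prod (p : M →ₗ[Λ] B))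
    ((i : A →ₗ[Λ] M).comp (LinearMap.fst Λ ↥A ↥B) +
      (s : B →ₗ[Λ] M).comp (LinearMap.snd Λ ↥A ↥B)) ?_ ?_⟩
  · apply LinearMap.ext
    rintro ⟨a, b⟩
    have h1 : p (i a + s b) = b := by
      rw [map_add, h.apply_apply, hs, zero_add]
    apply Prod.ext
    · show r (i a + s b) = a
      apply h.1
      rw [hr, h1]
      show i a + s b - s b = i a
      abel
    · exact h1
  · apply LinearMap.ext
    intro m
    show i (r m) + s (p m) = m
    rw [hr]
    abel

lemma projective_of_retract {K P : ModuleCat.{u} Λ} (i : K ⟶ P) (r : P ⟶ K)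
    (hr : ∀ k, r (i k) = k) (hP : Projective P) : Projective K := by
  constructor
  intro E X f e he
  refine ⟨i ≫ Projective.factorThru (r ≫ f) e, ?_⟩
  rw [Category.assoc, Projective.factorThru_comp, ← Category.assoc]
  have : i ≫ r = 𝟙 K := by ext k; exact hr k
  rw [this, Category.id_comp]

lemma projective_of_equiv {K K' : ModuleCat.{u} Λ} (e : ↥K ≃ₗ[Λ] ↥K') (h : Projective K') :
    Projective K :=
  projective_of_retract (e.toLinearMap : K ⟶ K') (e.symm.toLinearMap : K' ⟶ K)
    (fun k => e.symm_apply_apply k) h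

lemma isSES_comp_equiv_right {A M B B' : ModuleCat.{u} Λ} {i : A ⟶ M} {p : M ⟶ B}
    (h : IsSES Λ i p) (e : ↥B ≃ₗ[Λ] ↥B') :
    IsSES Λ i (((e.toLinearMap).comp (p : M →ₗ[Λ] B) : M →ₗ[Λ] ↥B') : M ⟶ ModuleCat.of Λ ↥B') := by
  refine ⟨h.1, fun b' => ?_, fun m => ?_⟩
  · obtain ⟨m, hm⟩ := h.2.1 (e.symm b')
    exact ⟨m, by show e (p m) = b'; rw [hm, e.apply_symm_apply]⟩
  · constructor
    · intro hm
      apply h.mem_range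
      have : e (p m) = e 0 := by rw [map_zero]; exact hm
      exact e.injective this
    · rintro ⟨a, rfl⟩
      show e (p (i a)) = 0
      rw [h.apply_apply, map_zero]

lemma schanuel {K P K' P' M : ModuleCat.{u} Λ}
    (i : K ⟶ P) (p : P ⟶ M) (h : IsSES Λ i p) (hP : Projective P)
    (i' : K' ⟶ P') (p' : P' ⟶ M) (h' : IsSES Λ i' p') (hP' : Projective P') :
    Nonempty ((↥K × ↥P') ≃ₗ[Λ] (↥K' × ↥P)) := by
  let X : Submodule Λ (↥P × ↥P') :=
    LinearMap.ker ((p : P →ₗ[Λ] M).comp (LinearMap.fst Λ ↥P ↥P') -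
      (p' : P' →ₗ[Λ] M).comp (LinearMap.snd Λ ↥P ↥P'))
  have hX : ∀ x : ↥P × ↥P', x ∈ X ↔ p x.1 = p' x.2 := by
    intro x
    show p x.1 - p' x.2 = 0 ↔ _
    exact sub_eq_zero
  let XM : ModuleCat.{u} Λ := ModuleCat.of Λ ↥X
  -- SES 0 → K' → X → P → 0
  let j₁ : K' ⟶ XM := ModuleCat.ofHom (LinearMap.codRestrict X
    ((LinearMap.inr Λ ↥P ↥P').comp (i' : K' →ₗ[Λ] P'))
    (fun k => (hX _).mpr (by show p 0 = p' (i' k); rw [map_zero, h'.apply_apply])))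
  let q₁ : XM ⟶ P := ModuleCat.ofHom ((LinearMap.fst Λ ↥P ↥P').comp X.subtype)
  have hses₁ : IsSES Λ j₁ q₁ := by
    refine ⟨?_, ?_, ?_⟩
    · intro x y hxy
      apply h'.1
      exact congrArg (fun z : ↥X => (z : ↥P × ↥P').2) hxy
    · intro x
      obtain ⟨y, hy⟩ := h'.2.1 (p x)
      exact ⟨⟨(x, y), (hX _).mpr hy.symm⟩, rfl⟩
    · rintro ⟨⟨x, y⟩, hmem⟩
      constructor
      · intro hx
        have hx1 : x = 0 := hx
        have hy1 : p' y = 0 := by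
          rw [← (hX _).mp hmem, hx1, map_zero]
        obtain ⟨k, hk⟩ := h'.mem_range hy1
        exact ⟨k, Subtype.ext (Prod.ext hx1.symm hk)⟩
      · rintro ⟨k, hk⟩
        rw [← hk]
        rfl
  -- SES 0 → K → X → P' → 0
  let j₂ : K ⟶ XM := ModuleCat.ofHom (LinearMap.codRestrict X
    ((LinearMap.inl Λ ↥P ↥P').comp (i : K →ₗ[Λ] P))
    (fun k => (hX _).mpr (by show p (i k) = p' 0; rw [map_zero, h.apply_apply])))
  let q₂ : XM ⟶ P' := ModuleCat.ofHom ((LinearMap.snd Λ ↥P ↥P').comp X.subtype)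
  have hses₂ : IsSES Λ j₂ q₂ := by
    refine ⟨?_, ?_, ?_⟩
    · intro x y hxy
      apply h.1
      exact congrArg (fun z : ↥X => (z : ↥P × ↥P').1) hxy
    · intro y
      obtain ⟨x, hx⟩ := h.2.1 (p' y)
      exact ⟨⟨(x, y), (hX _).mpr hx⟩, rfl⟩
    · rintro ⟨⟨x, y⟩, hmem⟩
      constructor
      · intro hy
        have hy1 : y = 0 := hy
        have hx1 : p x = 0 := by
          rw [(hX _).mp hmem, hy1, map_zero]
        obtain ⟨k, hk⟩ := h.mem_range hx1
        exact ⟨k, Subtype.ext (Prod.ext hk hy1.symm)⟩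
      · rintro ⟨k, hk⟩
        rw [← hk]
        rfl
  -- split both
  obtain ⟨s₁, hs₁⟩ := ext1Zero_of_projective (B := K') hP XM j₁ q₁ hses₁
  obtain ⟨e₁⟩ := split_ses_equiv hses₁ s₁ (fun b => hom_pt hs₁ b)
  obtain ⟨s₂, hs₂⟩ := ext1Zero_of_projective (B := K) hP' XM j₂ q₂ hses₂
  obtain ⟨e₂⟩ := split_ses_equiv hses₂ s₂ (fun b => hom_pt hs₂ b)
  exact ⟨e₂.symm.trans e₁⟩

lemma schanuel_gen {n : ℕ} {K K' A : ModuleCat.{u} Λ}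
    (h : IsNthSyzygyOf Λ n K A) (h' : IsNthSyzygyOf Λ n K' A) :
    ∃ Q Q' : ModuleCat.{u} Λ, Projective Q ∧ Projective Q' ∧
      Nonempty ((↥K × ↥Q) ≃ₗ[Λ] (↥K' × ↥Q')) := by
  induction n generalizing K K' with
  | zero =>
    obtain ⟨e⟩ := h
    obtain ⟨e'⟩ := h'
    refine ⟨ModuleCat.of Λ Λ, ModuleCat.of Λ Λ, ?_, ?_, ?_⟩
    · exact (IsProjective.iff_projective _).mp inferInstance
    · exact (IsProjective.iff_projective _).mp inferInstance
    · exact ⟨prodEquiv ((isoToEquiv e).trans (isoToEquiv e').symm) (LinearEquiv.refl Λ Λ)⟩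
  | succ n ih =>
    obtain ⟨L, hL, P, i, p, hP, hses⟩ := h
    obtain ⟨L', hL', P', i', p', hP', hses'⟩ := h'
    obtain ⟨Q, Q', hQ, hQ', ⟨e⟩⟩ := ih hL hL'
    -- SES 0 → K → P × Q → L × Q → 0
    let j₁ : K ⟶ ModuleCat.of Λ (↥P × ↥Q) := ModuleCat.ofHom ((LinearMap.inl Λ ↥P ↥Q).comp (i : K →ₗ[Λ] P))
    let q₁ : ModuleCat.of Λ (↥P × ↥Q) ⟶ ModuleCat.of Λ (↥L × ↥Q) :=
      ModuleCat.ofHom ((p : P →ₗ[Λ] L).prodMap (LinearMap.id : ↥Q →ₗ[Λ] ↥Q))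
    have hses₁ : IsSES Λ j₁ q₁ := by
      refine ⟨?_, ?_, ?_⟩
      · intro x y hxy
        apply hses.1
        exact congrArg Prod.fst hxy
      · rintro ⟨l, qq⟩
        obtain ⟨x, hx⟩ := hses.2.1 l
        exact ⟨(x, qq), Prod.ext hx rfl⟩
      · rintro ⟨x, qq⟩
        constructor
        · intro hx
          have h1 : p x = 0 := congrArg Prod.fst hx
          have h2 : qq = 0 := congrArg Prod.snd hx
          obtain ⟨k, hk⟩ := hses.mem_range h1
          exact ⟨k, Prod.ext hk h2.symm⟩
        · rintro ⟨k, hk⟩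
          rw [← hk]
          exact Prod.ext (hses.apply_apply k) rfl
    -- SES 0 → K' → P' × Q' → L × Q → 0 (via e.symm)
    let j₂ : K' ⟶ ModuleCat.of Λ (↥P' × ↥Q') := ModuleCat.ofHom ((LinearMap.inl Λ ↥P' ↥Q').comp (i' : K' →ₗ[Λ] P'))
    let q₂ : ModuleCat.of Λ (↥P' × ↥Q') ⟶ ModuleCat.of Λ (↥L' × ↥Q') :=
      ModuleCat.ofHom ((p' : P' →ₗ[Λ] L').prodMap (LinearMap.id : ↥Q' →ₗ[Λ] ↥Q'))
    have hses₂ : IsSES Λ j₂ q₂ := by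
      refine ⟨?_, ?_, ?_⟩
      · intro x y hxy
        apply hses'.1
        exact congrArg Prod.fst hxy
      · rintro ⟨l, qq⟩
        obtain ⟨x, hx⟩ := hses'.2.1 l
        exact ⟨(x, qq), Prod.ext hx rfl⟩
      · rintro ⟨x, qq⟩
        constructor
        · intro hx
          have h1 : p' x = 0 := congrArg Prod.fst hx
          have h2 : qq = 0 := congrArg Prod.snd hx
          obtain ⟨k, hk⟩ := hses'.mem_range h1
          exact ⟨k, Prod.ext hk h2.symm⟩
        · rintro ⟨k, hk⟩
          rw [← hk]
          exact Prod.ext (hses'.apply_apply k) rfl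
    have esymm : ↥(ModuleCat.of Λ (↥L' × ↥Q')) ≃ₗ[Λ] ↥(ModuleCat.of Λ (↥L × ↥Q)) := e.symm
    have hses₂' := isSES_comp_equiv_right hses₂ esymm
    obtain ⟨e2⟩ := schanuel j₁ q₁ hses₁ (projective_prod hP hQ) j₂ _ hses₂'
      (projective_prod hP' hQ')
    exact ⟨ModuleCat.of Λ (↥P' × ↥Q'), ModuleCat.of Λ (↥P × ↥Q),
      projective_prod hP' hQ', projective_prod hP hQ, ⟨e2⟩⟩

lemma ext1Zero_transfer {n : ℕ} {K K' A Y : ModuleCat.{u} Λ}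
    (h : IsNthSyzygyOf Λ n K A) (h' : IsNthSyzygyOf Λ n K' A)
    (hE : Ext1Zero Λ K Y) : Ext1Zero Λ K' Y := by
  obtain ⟨Q, Q', hQ, hQ', ⟨e⟩⟩ := schanuel_gen h h'
  have E1 : Ext1Zero Λ (ModuleCat.of Λ (↥K × ↥Q)) Y :=
    ext1Zero_prod hE (ext1Zero_of_projective hQ)
  have e' : ↥(ModuleCat.of Λ (↥K' × ↥Q')) ≃ₗ[Λ] ↥(ModuleCat.of Λ (↥K × ↥Q)) := e.symm
  have E2 : Ext1Zero Λ (ModuleCat.of Λ (↥K' × ↥Q')) Y := Ext1Zero.congr_left e' E1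
  exact ext1Zero_of_retract
    (ModuleCat.ofHom (LinearMap.inl Λ ↥K' ↥Q' : ↥K' →ₗ[Λ] ↥K' × ↥Q') : K' ⟶ ModuleCat.of Λ (↥K' × ↥Q'))
    (ModuleCat.ofHom (LinearMap.fst Λ ↥K' ↥Q' : ↥K' × ↥Q' →ₗ[Λ] ↥K') : ModuleCat.of Λ (↥K' × ↥Q') ⟶ K')
    (fun x => rfl) E2

lemma projective_of_isSyzygyOf_projective {K N : ModuleCat.{u} Λ}
    (h : IsSyzygyOf Λ K N) (hN : Projective N) : Projective K := by
  obtain ⟨P, i, p, hP, hses⟩ := h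
  obtain ⟨s, hs⟩ := ext1Zero_of_projective (B := K) hN P i p hses
  obtain ⟨r, hr⟩ := retraction_of_section hses s (fun b => hom_pt hs b)
  exact projective_of_retract i r hr hP

lemma canSyz_projective {M : ModuleCat.{u} Λ} (h : Projective M) (k : ℕ) :
    Projective (canSyz k M) := by
  induction k with
  | zero => exact h
  | succ k ih =>
    rw [canSyz_succ]
    exact projective_of_isSyzygyOf_projective (canOmega_isSyzygyOf _) ih

lemma exists_projective_nth_syzygy {n : ℕ} {M : ModuleCat.{u} Λ} (h : ProjDimLe Λ n M)
    (m : ℕ) : ∃ G : ModuleCat.{u} Λ, IsNthSyzygyOf Λ (n + m) G M ∧ Projective G := by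
  induction n generalizing M with
  | zero =>
    refine ⟨canSyz m M, ?_, canSyz_projective h m⟩
    have := canSyz_isNthSyzygyOf m M
    rwa [Nat.zero_add]
  | succ n ih =>
    obtain ⟨K₀, G₀, i, p, hG₀, hses, hres⟩ := h
    obtain ⟨G, hG, hGproj⟩ := ih hres
    have hK₀ : IsNthSyzygyOf Λ 1 K₀ M := ⟨M, ⟨Iso.refl M⟩, G₀, i, p, hG₀, hses⟩
    have := isNthSyzygyOf_comp hK₀ hG
    have harith : 1 + (n + m) = n + 1 + m := by omega
    rw [harith] at this
    exact ⟨G, this, hGproj⟩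

lemma projective_of_nth_syzygy {n m : ℕ} {K M : ModuleCat.{u} Λ} (h : ProjDimLe Λ n M)
    (hK : IsNthSyzygyOf Λ (n + m) K M) : Projective K := by
  obtain ⟨G, hG, hGproj⟩ := exists_projective_nth_syzygy h m
  obtain ⟨Q, Q', hQ, hQ', ⟨e⟩⟩ := schanuel_gen hK hG
  have : Projective (ModuleCat.of Λ (↥K × ↥Q)) :=
    projective_of_equiv e (projective_prod hGproj hQ')
  exact projective_of_retract
    (ModuleCat.ofHom (LinearMap.inl Λ ↥K ↥Q : ↥K →ₗ[Λ] ↥K × ↥Q) : K ⟶ ModuleCat.of Λ (↥K × ↥Q))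
    (ModuleCat.ofHom (LinearMap.fst Λ ↥K ↥Q : ↥K × ↥Q →ₗ[Λ] ↥K) : ModuleCat.of Λ (↥K × ↥Q) ⟶ K)
    (fun x => rfl) this

lemma projDimLe_of_canSyz_projective {n : ℕ} {M : ModuleCat.{u} Λ}
    (h : Projective (canSyz n M)) : ProjDimLe Λ n M := by
  induction n generalizing M with
  | zero => exact h
  | succ n ih =>
    refine ⟨canOmega M, freeCover M, canOmegaIncl M, freeCoverMap M,
      freeCover_projective M, canOmega_ses M, ih ?_⟩
    rw [← canSyz_succ']
    exact h

lemma projDimLe_finsupp (ι : Type u) {n : ℕ} {T : ModuleCat.{u} Λ} (h : ProjDimLe Λ n T) :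
    ProjDimLe Λ n (ModuleCat.of Λ (ι →₀ ↥T)) := by
  induction n generalizing T with
  | zero => exact projective_finsupp ι T h
  | succ n ih =>
    obtain ⟨K, G, i, p, hG, hses, hres⟩ := h
    exact ⟨ModuleCat.of Λ (ι →₀ ↥K), ModuleCat.of Λ (ι →₀ ↥G),
      ModuleCat.ofHom (Finsupp.mapRange.linearMap (α := ι) (i : K →ₗ[Λ] G)),
      ModuleCat.ofHom (Finsupp.mapRange.linearMap (α := ι) (p : G →ₗ[Λ] T)),
      projective_finsupp ι G hG, finsupp_ses ι hses, ih hres⟩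

end Schanuel

section Cosyzygy

noncomputable def cosyz (B : ModuleCat.{u} Λ) : ModuleCat.{u} Λ :=
  ModuleCat.of Λ (↥(Injective.under B) ⧸
    LinearMap.range ((Injective.ι B : ↥B →ₗ[Λ] ↥(Injective.under B))))

noncomputable def cosyzProj (B : ModuleCat.{u} Λ) : Injective.under B ⟶ cosyz B :=
  ModuleCat.ofHom (LinearMap.range ((Injective.ι B : ↥B →ₗ[Λ] ↥(Injective.under B)))).mkQ

lemma cosyz_ses (B : ModuleCat.{u} Λ) : IsSES Λ (Injective.ι B) (cosyzProj B) := by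
  refine ⟨?_, ?_, ?_⟩
  · exact (ModuleCat.mono_iff_injective (Injective.ι B)).mp inferInstance
  · exact Submodule.mkQ_surjective _
  · intro x
    show Submodule.Quotient.mk x = 0 ↔ _
    rw [Submodule.Quotient.mk_eq_zero]
    constructor
    · rintro ⟨b, hb⟩
      exact ⟨b, hb⟩
    · rintro ⟨b, hb⟩
      exact ⟨b, hb⟩

end Cosyzygy

end GorensteinFDC
namespace GorensteinFDC

variable {Λ : Type u} [Ring Λ]

section ExtGe

lemma ext1Zero_cosyz_step {K Z : ModuleCat.{u} Λ} (E2 : Ext1Zero Λ (canOmega K) Z) :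
    Ext1Zero Λ K (cosyz Z) :=
  chase_main (Injective.ι Z) (cosyzProj Z) (cosyz_ses Z) (canOmegaIncl K) (freeCoverMap K)
    (canOmega_ses K) (freeCover_projective K)
    (ext1Zero_of_injective inferInstance) E2

lemma isNthSyzygyOf_canOmega_succ {m : ℕ} {K A : ModuleCat.{u} Λ}
    (h : IsNthSyzygyOf Λ m K A) : IsNthSyzygyOf Λ (m + 1) (canOmega K) A :=
  ⟨K, h, canOmega_isSyzygyOf K⟩

lemma extGe1Zero_cosyz {U Z : ModuleCat.{u} Λ} (h : ExtGe1Zero Λ U Z) :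
    ExtGe1Zero Λ U (cosyz Z) := by
  intro m K hK
  exact ext1Zero_cosyz_step (h (m + 1) (canOmega K) (isNthSyzygyOf_canOmega_succ hK))

/-- If `X` is in the left perp of a class closed under cosyzygies, so is any syzygy of `X`. -/
lemma ext1Zero_syzygy_left {K G X B : ModuleCat.{u} Λ} (i : K ⟶ G) (p : G ⟶ X)
    (hses : IsSES Λ i p) (hG : Projective G)
    (E1 : Ext1Zero Λ X (cosyz B)) : Ext1Zero Λ K B :=
  chase_four (Injective.ι B) (cosyzProj B) (cosyz_ses B) i p hses hG
    E1 (ext1Zero_of_injective inferInstance)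

/-- `(T ⊕ S)^{⊥∞} ⊆ T^{⊥∞}` -/
lemma extGe1Zero_prod_left {T S Z : ModuleCat.{u} Λ}
    (h : ExtGe1Zero Λ (ModuleCat.of Λ (↥T × ↥S)) Z) : ExtGe1Zero Λ T Z := by
  intro m K hK
  have hprod : IsNthSyzygyOf Λ m (ModuleCat.of Λ (↥K × ↥(canSyz m S)))
      (ModuleCat.of Λ (↥T × ↥S)) :=
    isNthSyzygyOf_prod hK (canSyz_isNthSyzygyOf m S)
  have := h m _ hprod
  exact ext1Zero_of_retract
    (ModuleCat.ofHom (LinearMap.inl Λ ↥K ↥(canSyz m S) : ↥K →ₗ[Λ] ↥K × ↥(canSyz m S)) :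
      K ⟶ ModuleCat.of Λ (↥K × ↥(canSyz m S)))
    (ModuleCat.ofHom (LinearMap.fst Λ ↥K ↥(canSyz m S) : ↥K × ↥(canSyz m S) →ₗ[Λ] ↥K) :
      ModuleCat.of Λ (↥K × ↥(canSyz m S)) ⟶ K)
    (fun x => rfl) this

lemma extGe1Zero_congr_left {A A' Y : ModuleCat.{u} Λ} (e : ↥A ≃ₗ[Λ] ↥A')
    (h : ExtGe1Zero Λ A' Y) : ExtGe1Zero Λ A Y := by
  intro m K hK
  exact h m K (isNthSyzygyOf_congr_right e hK)

lemma extGe1Zero_of_retract {M M' Y : ModuleCat.{u} Λ} (i₀ : M ⟶ M') (r : M' ⟶ M)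
    (hr : ∀ x, r (i₀ x) = x) (h : ExtGe1Zero Λ M' Y) : ExtGe1Zero Λ M Y := by
  intro m K hK
  -- M' ≃ M × ker r
  let N : ModuleCat.{u} Λ := ModuleCat.of Λ ↥(LinearMap.ker (r : M' →ₗ[Λ] M))
  have hmem : ∀ x : M', ((LinearMap.id : M' →ₗ[Λ] M') -
      (i₀ : M →ₗ[Λ] M').comp (r : M' →ₗ[Λ] M)) x ∈ LinearMap.ker (r : M' →ₗ[Λ] M) := by
    intro x
    show r (x - i₀ (r x)) = 0
    rw [map_sub, hr]
    abel
  let e : ↥M' ≃ₗ[Λ] (↥M × ↥N) := LinearEquiv.ofLinear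
    ((r : M' →ₗ[Λ] M).prod (LinearMap.codRestrict _ _ hmem))
    ((i₀ : M →ₗ[Λ] M').comp (LinearMap.fst Λ ↥M ↥N) +
      (LinearMap.ker (r : M' →ₗ[Λ] M)).subtype.comp (LinearMap.snd Λ ↥M ↥N))
    (by
      apply LinearMap.ext
      rintro ⟨x, k, hk0⟩
      have hk : r k = 0 := hk0
      apply Prod.ext
      · show r (i₀ x + k) = x
        rw [map_add, hr, hk, add_zero]
      · apply Subtype.ext
        show (i₀ x + k) - i₀ (r (i₀ x + k)) = k
        rw [map_add, hr, hk, add_zero]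
        abel)
    (by
      apply LinearMap.ext
      intro x
      show i₀ (r x) + (x - i₀ (r x)) = x
      abel)
  have hMN : IsNthSyzygyOf Λ m (ModuleCat.of Λ (↥(canSyz m M) × ↥(canSyz m N))) M' :=
    isNthSyzygyOf_congr_right e.symm
      (isNthSyzygyOf_prod (canSyz_isNthSyzygyOf m M) (canSyz_isNthSyzygyOf m N))
  have h1 : Ext1Zero Λ (ModuleCat.of Λ (↥(canSyz m M) × ↥(canSyz m N))) Y := h m _ hMN
  have h2 : Ext1Zero Λ (canSyz m M) Y :=
    ext1Zero_of_retract
      (ModuleCat.ofHom (LinearMap.inl Λ ↥(canSyz m M) ↥(canSyz m N)) :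
        canSyz m M ⟶ ModuleCat.of Λ (↥(canSyz m M) × ↥(canSyz m N)))
      (ModuleCat.ofHom (LinearMap.fst Λ ↥(canSyz m M) ↥(canSyz m N)) :
        ModuleCat.of Λ (↥(canSyz m M) × ↥(canSyz m N)) ⟶ canSyz m M)
      (fun x => rfl) h1
  exact ext1Zero_transfer (canSyz_isNthSyzygyOf m M) hK h2

lemma extGe1Zero_finsupp {A Y : ModuleCat.{u} Λ} (ι : Type u) (h : ExtGe1Zero Λ A Y) :
    ExtGe1Zero Λ (ModuleCat.of Λ (ι →₀ ↥A)) Y := by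
  intro m K hK
  have hcan : IsNthSyzygyOf Λ m (ModuleCat.of Λ (ι →₀ ↥(canSyz m A)))
      (ModuleCat.of Λ (ι →₀ ↥A)) := isNthSyzygyOf_finsupp ι (canSyz_isNthSyzygyOf m A)
  have h1 : Ext1Zero Λ (ModuleCat.of Λ (ι →₀ ↥(canSyz m A))) Y :=
    ext1Zero_finsupp ι (h m _ (canSyz_isNthSyzygyOf m A))
  exact ext1Zero_transfer hcan hK h1

lemma horseshoe {A B C : ModuleCat.{u} Λ} (a : A ⟶ B) (b : B ⟶ C) (h : IsSES Λ a b) :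
    ∃ (KB : ModuleCat.{u} Λ) (a' : canOmega A ⟶ KB) (b' : KB ⟶ canOmega C),
      IsSES Λ a' b' ∧ IsSyzygyOf Λ KB B := by
  haveI : Epi b := (ModuleCat.epi_iff_surjective b).mpr h.2.1
  haveI := freeCover_projective C
  let g : freeCover C ⟶ B := Projective.factorThru (freeCoverMap C) b
  have hg : ∀ y, b (g y) = freeCoverMap C y :=
    fun y => hom_pt (Projective.factorThru_comp (freeCoverMap C) b) y
  let FA := freeCover A
  let FC := freeCover C
  let qB : ModuleCat.of Λ (↥FA × ↥FC) ⟶ B :=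
    ModuleCat.ofHom (((a : A →ₗ[Λ] B).comp ((freeCoverMap A : FA →ₗ[Λ] A))).comp (LinearMap.fst Λ ↥FA ↥FC) +
      (g : FC →ₗ[Λ] B).comp (LinearMap.snd Λ ↥FA ↥FC))
  have hqB : ∀ z : ↥FA × ↥FC, qB z = a (freeCoverMap A z.1) + g z.2 := fun z => rfl
  have hqB_surj : Function.Surjective qB := by
    intro x
    obtain ⟨y, hy⟩ := (freeCoverMap_surjective C) (b x)
    have hbx : b (x - g y) = 0 := by
      rw [map_sub, hg, hy]
      abel
    obtain ⟨z, hz⟩ := h.mem_range hbx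
    obtain ⟨w, hw⟩ := (freeCoverMap_surjective A) z
    refine ⟨(w, y), ?_⟩
    rw [hqB, hw, hz]
    abel
  let KB : ModuleCat.{u} Λ := ModuleCat.of Λ ↥(LinearMap.ker qB.hom)
  let jKB : KB ⟶ ModuleCat.of Λ (↥FA × ↥FC) := ModuleCat.ofHom (LinearMap.ker qB.hom).subtype
  have hqB_ses : IsSES Λ jKB qB := by
    refine ⟨Subtype.val_injective, hqB_surj, ?_⟩
    intro z
    constructor
    · intro hz
      exact ⟨⟨z, hz⟩, rfl⟩
    · rintro ⟨⟨w, hw⟩, rfl⟩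
      exact hw
  -- the two maps
  have ha'mem : ∀ x : canOmega A,
      ((LinearMap.inl Λ ↥FA ↥FC).comp
        ((LinearMap.ker ((freeCoverMap A : FA →ₗ[Λ] A))).subtype)) x ∈
        LinearMap.ker qB.hom := by
    rintro ⟨x, hx0⟩
    show qB (x, 0) = 0
    rw [hqB]
    have hx : freeCoverMap A x = 0 := hx0
    show a (freeCoverMap A x) + g 0 = 0
    rw [hx, map_zero, map_zero, add_zero]
  let a' : canOmega A ⟶ KB := ModuleCat.ofHom (LinearMap.codRestrict _ _ ha'mem)
  have hb'mem : ∀ z : KB,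
      ((LinearMap.snd Λ ↥FA ↥FC).comp ((LinearMap.ker qB.hom).subtype)) z ∈
        LinearMap.ker ((freeCoverMap C : FC →ₗ[Λ] C)) := by
    rintro ⟨⟨x, y⟩, hz⟩
    show freeCoverMap C y = 0
    have h0 : a (freeCoverMap A x) + g y = 0 := hz
    have : b (a (freeCoverMap A x) + g y) = 0 := by rw [h0, map_zero]
    rw [map_add, h.apply_apply, hg, zero_add] at this
    exact this
  let b' : KB ⟶ canOmega C := ModuleCat.ofHom (LinearMap.codRestrict _ _ hb'mem)
  refine ⟨KB, a', b', ⟨?_, ?_, ?_⟩, ⟨ModuleCat.of Λ (↥FA × ↥FC), jKB, qB,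
    projective_prod (freeCover_projective A) (freeCover_projective C), hqB_ses⟩⟩
  · intro x y hxy
    apply Subtype.ext
    have hval := congrArg Subtype.val hxy
    have := congrArg (Prod.fst (α := ↥FA) (β := ↥FC)) hval
    exact this
  · rintro ⟨y, hy⟩
    -- y ∈ ker εC; g y ∈ ker b
    have hby : b (g y) = 0 := by rw [hg]; exact hy
    obtain ⟨z, hz⟩ := h.mem_range hby
    obtain ⟨w, hw⟩ := (freeCoverMap_surjective A) z
    have hmem : ((-w, y) : ↥FA × ↥FC) ∈ LinearMap.ker qB.hom := by
      show qB (-w, y) = 0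
      rw [hqB]
      show a (freeCoverMap A (-w)) + g y = 0
      rw [map_neg, map_neg, hw, hz]
      abel
    refine ⟨⟨(-w, y), hmem⟩, ?_⟩
    apply Subtype.ext
    rfl
  · rintro ⟨⟨x, y⟩, hz⟩
    constructor
    · intro hb'
      have hy0 : y = 0 := congrArg Subtype.val hb'
      have hx : a (freeCoverMap A x) = 0 := by
        have h0 : a (freeCoverMap A x) + g y = 0 := hz
        rw [hy0, map_zero, add_zero] at h0
        exact h0
      have hx2 : freeCoverMap A x = 0 := by
        apply h.1
        rw [hx, map_zero]
      refine ⟨⟨x, hx2⟩, ?_⟩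
      apply Subtype.ext
      exact Prod.ext rfl hy0.symm
    · rintro ⟨w, hw⟩
      have h1 : y = 0 := by
        have hval := congrArg Subtype.val hw
        have := congrArg (Prod.snd (α := ↥FA) (β := ↥FC)) hval
        exact this.symm
      apply Subtype.ext
      exact h1

lemma extGe1Zero_of_ses {A B C Y : ModuleCat.{u} Λ} (a : A ⟶ B) (b : B ⟶ C)
    (hses : IsSES Λ a b) (hB : ExtGe1Zero Λ B Y) (hC : ExtGe1Zero Λ C Y) :
    ExtGe1Zero Λ A Y := by
  have tower : ∀ m : ℕ, ∃ (Bm : ModuleCat.{u} Λ) (am : canSyz m A ⟶ Bm)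
      (bm : Bm ⟶ canSyz m C), IsSES Λ am bm ∧ IsNthSyzygyOf Λ m Bm B := by
    intro m
    induction m with
    | zero => exact ⟨B, a, b, hses, ⟨Iso.refl B⟩⟩
    | succ m ih =>
      obtain ⟨Bm, am, bm, hsesm, hBm⟩ := ih
      obtain ⟨KB, a', b', hses', hsyz⟩ := horseshoe am bm hsesm
      rw [canSyz_succ m A, canSyz_succ m C]
      exact ⟨KB, a', b', hses', ⟨Bm, hBm, hsyz⟩⟩
  intro m K hK
  obtain ⟨Bm, am, bm, hsesm, hBm⟩ := tower m
  have E1 : Ext1Zero Λ Bm Y := hB m Bm hBm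
  have E2 : Ext1Zero Λ (canOmega (canSyz m C)) Y := by
    have := hC (m + 1) (canSyz (m + 1) C) (canSyz_isNthSyzygyOf (m + 1) C)
    rwa [canSyz_succ] at this
  have hres : Ext1Zero Λ (canSyz m A) Y :=
    chase_two am bm hsesm (canOmegaIncl (canSyz m C)) (freeCoverMap (canSyz m C))
      (canOmega_ses (canSyz m C)) (freeCover_projective (canSyz m C)) E1 E2
  exact ext1Zero_transfer (canSyz_isNthSyzygyOf m A) hK hres

end ExtGe

end GorensteinFDC
namespace GorensteinFDC

variable {Λ : Type u} [Ring Λ]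

section SGP

/-- A strongly Gorenstein projective module has vanishing `Ext^{≥1}` against every module
of finite projective dimension. -/
lemma sgp_ext1Zero {S : ModuleCat.{u} Λ} (hS : IsStronglyGorensteinProjective Λ S)
    {j : ℕ} {M : ModuleCat.{u} Λ} (hM : ProjDimLe Λ j M) :
    ∀ (m : ℕ) (K : ModuleCat.{u} Λ), IsNthSyzygyOf Λ m K S → Ext1Zero Λ K M := by
  obtain ⟨P, f, hP, hex, hlift, ⟨eS⟩⟩ := hS
  have hff : ∀ x : P, f (f x) = 0 := fun x => (hex (f x)).mpr ⟨x, rfl⟩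
  let KS : ModuleCat.{u} Λ := ModuleCat.of Λ ↥(LinearMap.ker (f : P →ₗ[Λ] P))
  let incS : KS ⟶ P := ModuleCat.ofHom (LinearMap.ker (f : P →ₗ[Λ] P)).subtype
  let prS : P ⟶ KS := ModuleCat.ofHom ((f : P →ₗ[Λ] P).codRestrict _ (fun x => hff x))
  have hsesS : IsSES Λ incS prS := by
    refine ⟨Subtype.val_injective, ?_, ?_⟩
    · rintro ⟨y, hy⟩
      obtain ⟨x, hx⟩ := (hex y).mp hy
      exact ⟨x, Subtype.ext hx⟩
    · intro x
      constructor
      · intro hx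
        have hfx : f x = 0 := congrArg Subtype.val hx
        exact ⟨⟨x, hfx⟩, rfl⟩
      · rintro ⟨⟨y, hy⟩, rfl⟩
        exact Subtype.ext hy
  have hsyzKS : ∀ m : ℕ, IsNthSyzygyOf Λ m KS S := by
    intro m
    induction m with
    | zero => exact ⟨(eS.symm).toModuleIso⟩
    | succ m ih => exact ⟨KS, ih, P, incS, prS, hP, hsesS⟩
  -- base case: Ext¹(KS, Q) = 0 for projective Q
  have base : ∀ (Q : ModuleCat.{u} Λ), Projective Q → Ext1Zero Λ KS Q := by
    intro Q hQ E α β hE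
    haveI : Epi β := (ModuleCat.epi_iff_surjective β).mpr hE.2.1
    let γ : P ⟶ E := Projective.factorThru prS β
    have hγ : ∀ x, β (γ x) = prS x := fun x => hom_pt (Projective.factorThru_comp prS β) x
    have hmem : ∀ x : P, ∃ z : Q, α z = ((γ : P →ₗ[Λ] E).comp (f : P →ₗ[Λ] P)) x := by
      intro x
      apply hE.mem_range
      show β (γ (f x)) = 0
      rw [hγ]
      exact Subtype.ext (hff x)
    obtain ⟨g₀, hg₀0⟩ := exists_factorKer α hE.1 (ModuleCat.ofHom ((γ : P →ₗ[Λ] E).comp (f : P →ₗ[Λ] P))) hmem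
    have hg₀ : ∀ x, α (g₀ x) = γ (f x) := fun x => hg₀0 x
    have hg₀f : f ≫ (g₀ : P ⟶ Q) = 0 := by
      ext x
      apply hE.1
      show α (g₀ (f x)) = α 0
      rw [hg₀, hff, map_zero, map_zero]
    obtain ⟨hm, hhm⟩ := hlift Q hQ g₀ hg₀f
    have hhm' : ∀ x, hm (f x) = g₀ x := fun x => hom_pt hhm x
    let c : P ⟶ E := ModuleCat.ofHom ((γ : P →ₗ[Λ] E) - (α : Q →ₗ[Λ] E).comp (hm : P →ₗ[Λ] Q))
    have hker : ∀ x, prS x = 0 → c x = 0 := by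
      intro x hx
      have hfx : f x = 0 := congrArg Subtype.val hx
      obtain ⟨z, hz⟩ := (hex x).mp hfx
      show γ x - α (hm x) = 0
      rw [← hz, hhm', hg₀]
      abel
    obtain ⟨s, hs⟩ := exists_cofactor prS hsesS.2.1 c hker
    refine ⟨s, ?_⟩
    refine ModuleCat.hom_ext (LinearMap.ext fun k => ?_)
    obtain ⟨x, rfl⟩ := hsesS.2.1 k
    show β (s (prS x)) = prS x
    rw [hs]
    show β (γ x - α (hm x)) = prS x
    rw [map_sub, hγ, hE.apply_apply]
    abel
  -- induction on projective dimension
  have main : ∀ (j : ℕ) (M : ModuleCat.{u} Λ), ProjDimLe Λ j M → Ext1Zero Λ KS M := by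
    intro j
    induction j with
    | zero => exact fun M hM => base M hM
    | succ j ih =>
      rintro M ⟨M₁, G, i, p, hG, hses, hres⟩
      exact chase_main i p hses incS prS hsesS hP (base G hG) (ih M₁ hres)
  intro m K hK
  exact ext1Zero_transfer (hsyzKS m) hK (main j M hM)

end SGP

section Tilting

lemma addClass_extGe1Zero {T Y : ModuleCat.{u} Λ} (hY : ExtGe1Zero Λ T Y)
    {U : ModuleCat.{u} Λ} (hU : U ∈ AddClass Λ T) : ExtGe1Zero Λ U Y := by
  obtain ⟨ι, i, r, hir⟩ := hU
  exact extGe1Zero_of_retract i r (fun x => hom_pt hir x) (extGe1Zero_finsupp ι hY)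

lemma coresol_extGe {T Y : ModuleCat.{u} Λ} (hY : ExtGe1Zero Λ T Y) :
    ∀ (m : ℕ) (V : ModuleCat.{u} Λ), CoresolDimLe Λ (AddClass Λ T) m V →
      ExtGe1Zero Λ V Y := by
  intro m
  induction m with
  | zero => exact fun V hV => addClass_extGe1Zero hY hV
  | succ m ih =>
    rintro V ⟨U₀, V₁, i, p, hU₀, hses, hco⟩
    exact extGe1Zero_of_ses i p hses (addClass_extGe1Zero hY hU₀) (ih V₁ hco)

/-- The key tilting approximation: every `Y ∈ T^{⊥∞}` fits in a short exact sequence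
`0 → Y₁ → T^{(κ)} → Y → 0` with `Y₁ ∈ T^{⊥∞}`. -/
lemma tilting_approx {n : ℕ} {T : ModuleCat.{u} Λ} (hT : IsTilting Λ n T)
    {Y : ModuleCat.{u} Λ} (hY : Y ∈ perpInfOf Λ T) :
    ∃ (κ : Type u) (Y₁ : ModuleCat.{u} Λ) (ι₁ : Y₁ ⟶ ModuleCat.of Λ (κ →₀ ↥T))
      (φ : ModuleCat.of Λ (κ →₀ ↥T) ⟶ Y),
      IsSES Λ ι₁ φ ∧ Y₁ ∈ perpInfOf Λ T := by
  classical
  have hY' : ExtGe1Zero Λ T Y := hY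
  let κ := (T ⟶ Y)
  let φ : ModuleCat.of Λ (κ →₀ ↥T) ⟶ Y :=
    ModuleCat.ofHom (Finsupp.lsum ℕ (fun fm : κ => (fm : ↥T →ₗ[Λ] ↥Y)))
  have hsingle : ∀ (fm : κ) (t : ↥T), φ (Finsupp.single fm t) = fm t := by
    intro fm t
    show (Finsupp.lsum ℕ (fun fm : κ => (fm : ↥T →ₗ[Λ] ↥Y))) (Finsupp.single fm t) = fm t
    rw [Finsupp.lsum_single]
  -- surjectivity
  have hφ_surj : Function.Surjective φ := by
    intro y
    obtain ⟨m, hco⟩ := hT.2.2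
    -- extend the map Λ → Y, 1 ↦ y, to some module in Add T
    have hext : ∃ (ι' : Type u) (Ψ : ModuleCat.of Λ (ι' →₀ ↥T) ⟶ Y)
        (w : ModuleCat.of Λ Λ ⟶ ModuleCat.of Λ (ι' →₀ ↥T)),
        Ψ (w (1 : Λ)) = y := by
      have hχ : ∃ χ : ModuleCat.of Λ Λ ⟶ Y, χ (1 : Λ) = y :=
        ⟨ModuleCat.ofHom (LinearMap.toSpanSingleton Λ ↥Y y), by
          show (1 : Λ) • y = y
          rw [one_smul]⟩
      obtain ⟨χ, hχ1⟩ := hχ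
      cases m with
      | zero =>
        obtain ⟨ι', iΛ, rΛ, hir⟩ := hco
        refine ⟨ι', rΛ ≫ χ, iΛ, ?_⟩
        show χ (rΛ (iΛ (1 : Λ))) = y
        have h1 : rΛ (iΛ (1 : Λ)) = (1 : Λ) := hom_pt hir (1 : Λ)
        rw [h1]
        exact hχ1
      | succ m =>
        obtain ⟨U₀, V₁, i, p, hU₀, hses, hco₁⟩ := hco
        have hV₁ : Ext1Zero Λ V₁ Y := (coresol_extGe hY' m V₁ hco₁) 0 V₁ ⟨Iso.refl V₁⟩
        obtain ⟨Χ, hΧ⟩ := exists_extend_of_ext1Zero i p hses hV₁ χ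
        obtain ⟨ι', iU, rU, hir⟩ := hU₀
        refine ⟨ι', rU ≫ Χ, i ≫ iU, ?_⟩
        show Χ (rU (iU (i (1 : Λ)))) = y
        have h1 : rU (iU (i (1 : Λ))) = i (1 : Λ) := hom_pt hir (i (1 : Λ))
        rw [h1, hΧ]
        exact hχ1
    obtain ⟨ι', Ψ, w, hΨw⟩ := hext
    have hrange : ∀ x : (ι' →₀ ↥T), Ψ x ∈ LinearMap.range φ.hom := by
      intro x
      induction x using Finsupp.induction with
      | zero =>
        rw [map_zero]
        exact Submodule.zero_mem _
      | single_add a tt x _ _ ihx =>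
        rw [map_add]
        apply Submodule.add_mem
        · let ψa : κ := ModuleCat.ofHom ((Ψ : (ι' →₀ ↥T) →ₗ[Λ] ↥Y).comp (Finsupp.lsingle a))
          refine ⟨Finsupp.single ψa tt, ?_⟩
          rw [hsingle]
          rfl
        · exact ihx
    obtain ⟨x₀, hx₀⟩ := hrange (w (1 : Λ))
    exact ⟨x₀, by rw [hx₀, hΨw]⟩
  -- the kernel
  let Y₁ : ModuleCat.{u} Λ := ModuleCat.of Λ ↥(LinearMap.ker φ.hom)
  let ι₁ : Y₁ ⟶ ModuleCat.of Λ (κ →₀ ↥T) := ModuleCat.ofHom (LinearMap.ker φ.hom).subtype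
  have hsesφ : IsSES Λ ι₁ φ := by
    refine ⟨Subtype.val_injective, hφ_surj, ?_⟩
    intro x
    constructor
    · intro hx
      exact ⟨⟨x, hx⟩, rfl⟩
    · rintro ⟨⟨z, hz⟩, rfl⟩
      exact hz
  refine ⟨κ, Y₁, ι₁, φ, hsesφ, ?_⟩
  intro m K hK
  cases m with
  | zero =>
    obtain ⟨e0⟩ := hK
    let e : ↥K ≃ₗ[Λ] ↥T := isoToEquiv e0
    have hsurj : ∀ ψ : K ⟶ Y, ∃ χ : K ⟶ ModuleCat.of Λ (κ →₀ ↥T), ∀ k, φ (χ k) = ψ k := by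
      intro ψ
      let fm : κ := (ψ : ↥K →ₗ[Λ] ↥Y).comp (e.symm : ↥T →ₗ[Λ] ↥K)
      refine ⟨ModuleCat.ofHom ((Finsupp.lsingle fm : ↥T →ₗ[Λ] (κ →₀ ↥T)).comp (e : ↥K →ₗ[Λ] ↥T)), fun k => ?_⟩
      show φ (Finsupp.single fm (e k)) = ψ k
      rw [hsingle]
      show ψ (e.symm (e k)) = ψ k
      rw [e.symm_apply_apply]
    have E2 : Ext1Zero Λ K (ModuleCat.of Λ (κ →₀ ↥T)) := hT.2.1 κ 0 K ⟨e0⟩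
    exact chase_homsurj ι₁ φ hsesφ hsurj E2
  | succ m =>
    obtain ⟨L, hL, PP, iK, pK, hPP, hsesK⟩ := hK
    have E1 : Ext1Zero Λ L Y := hY m L hL
    have E2 : Ext1Zero Λ K (ModuleCat.of Λ (κ →₀ ↥T)) :=
      hT.2.1 κ (m + 1) K ⟨L, hL, PP, iK, pK, hPP, hsesK⟩
    exact chase_four ι₁ φ hsesφ iK pK hsesK hPP E1 E2

end Tilting

end GorensteinFDC
namespace GorensteinFDC

variable {Λ : Type u} [Ring Λ]

section Assembly

lemma projective_of_ext1Zero_all {K : ModuleCat.{u} Λ} (h : ∀ W : ModuleCat.{u} Λ,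
    Ext1Zero Λ K W) : Projective K := by
  obtain ⟨s, hs⟩ := h (canOmega K) (freeCover K) (canOmegaIncl K) (freeCoverMap K)
    (canOmega_ses K)
  exact projective_of_retract s (freeCoverMap K) (fun k => hom_pt hs k)
    (freeCover_projective K)

lemma perpT_cosyz_iter {n : ℕ} {T : ModuleCat.{u} Λ} (hpdT : ProjDimLe Λ n T) :
    ∀ (j : ℕ) (Z : ModuleCat.{u} Λ),
      (∀ (m : ℕ) (K : ModuleCat.{u} Λ), IsNthSyzygyOf Λ (m + j) K T → Ext1Zero Λ K Z) →
      ExtGe1Zero Λ T (cosyz^[j] Z) := by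
  intro j
  induction j with
  | zero => exact fun Z hyp m K hK => hyp m K hK
  | succ j ih =>
    intro Z hyp
    rw [Function.iterate_succ_apply]
    apply ih (cosyz Z)
    intro m K hK
    exact ext1Zero_cosyz_step (hyp m (canOmega K) (isNthSyzygyOf_canOmega_succ hK))

lemma cosyz_iter_mem_perpInf {n : ℕ} {T : ModuleCat.{u} Λ} (hpdT : ProjDimLe Λ n T)
    (W : ModuleCat.{u} Λ) : (cosyz^[n] W) ∈ perpInfOf Λ T := by
  apply perpT_cosyz_iter hpdT n W
  intro m K hK
  have hK' : IsNthSyzygyOf Λ (n + m) K T := by rwa [Nat.add_comm] at hK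
  exact ext1Zero_of_projective (projective_of_nth_syzygy hpdT hK')

lemma descend_lemma {n : ℕ} {T X : ModuleCat.{u} Λ} (hpdT : ProjDimLe Λ n T)
    (hXT : ∀ Z ∈ perpInfOf Λ T, Ext1Zero Λ X Z) (W : ModuleCat.{u} Λ) :
    ∀ j k : ℕ, j + k = n → Ext1Zero Λ (canSyz j X) (cosyz^[k] W) := by
  intro j
  induction j with
  | zero =>
    intro k hk
    have hk' : k = n := by omega
    subst hk'
    exact hXT _ (cosyz_iter_mem_perpInf hpdT W)
  | succ j ih =>
    intro k hk
    have E1 : Ext1Zero Λ (canSyz j X) (cosyz^[k + 1] W) := ih (k + 1) (by omega)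
    rw [Function.iterate_succ_apply'] at E1
    have := ext1Zero_syzygy_left (canOmegaIncl (canSyz j X)) (freeCoverMap (canSyz j X))
      (canOmega_ses (canSyz j X)) (freeCover_projective (canSyz j X)) E1
    rwa [← canSyz_succ] at this

lemma projDimLe_of_leftPerp {n : ℕ} {T X : ModuleCat.{u} Λ} (hpdT : ProjDimLe Λ n T)
    (hXT : ∀ Z ∈ perpInfOf Λ T, Ext1Zero Λ X Z) : ProjDimLe Λ n X := by
  apply projDimLe_of_canSyz_projective
  apply projective_of_ext1Zero_all
  intro W
  have := descend_lemma hpdT hXT W n 0 (by omega)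
  simpa using this

/-- `T^{(κ)} ∈ (T ⊕ S)^{⊥∞}`. -/
lemma tiltingCoprod_mem_perpInf {n : ℕ} {T S : ModuleCat.{u} Λ} (hT : IsTilting Λ n T)
    (hS : IsStronglyGorensteinProjective Λ S) (κ : Type u) :
    (ModuleCat.of Λ (κ →₀ ↥T)) ∈ perpInfOf Λ (ModuleCat.of Λ (↥T × ↥S)) := by
  intro m K hK
  have hTpart : Ext1Zero Λ (canSyz m T) (ModuleCat.of Λ (κ →₀ ↥T)) :=
    hT.2.1 κ m (canSyz m T) (canSyz_isNthSyzygyOf m T)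
  have hSpart : Ext1Zero Λ (canSyz m S) (ModuleCat.of Λ (κ →₀ ↥T)) :=
    sgp_ext1Zero hS (projDimLe_finsupp κ hT.1) m (canSyz m S) (canSyz_isNthSyzygyOf m S)
  have hcan : IsNthSyzygyOf Λ m (ModuleCat.of Λ (↥(canSyz m T) × ↥(canSyz m S)))
      (ModuleCat.of Λ (↥T × ↥S)) :=
    isNthSyzygyOf_prod (canSyz_isNthSyzygyOf m T) (canSyz_isNthSyzygyOf m S)
  exact ext1Zero_transfer hcan hK (ext1Zero_prod hTpart hSpart)

/-- the inclusion `L ∩ P_n ⊆ ^⊥(T^{⊥∞})` -/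
lemma main_sub {n : ℕ} {T S : ModuleCat.{u} Λ} (hT : IsTilting Λ n T)
    (hS : IsStronglyGorensteinProjective Λ S) :
    ∀ (j : ℕ) (X : ModuleCat.{u} Λ),
      (∀ B ∈ perpInfOf Λ (ModuleCat.of Λ (↥T × ↥S)), Ext1Zero Λ X B) →
      ProjDimLe Λ j X → ∀ Y ∈ perpInfOf Λ T, Ext1Zero Λ X Y := by
  intro j
  induction j with
  | zero =>
    intro X hXL hpd Y hY
    exact ext1Zero_of_projective hpd
  | succ j ih =>
    rintro X hXL ⟨K, G, i, p, hG, hses, hres⟩ Y hY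
    obtain ⟨κ, Y₁, ι₁, φ, hsesφ, hY₁⟩ := tilting_approx hT hY
    have E1 : Ext1Zero Λ X (ModuleCat.of Λ (κ →₀ ↥T)) :=
      hXL _ (tiltingCoprod_mem_perpInf hT hS κ)
    have hKL : ∀ B ∈ perpInfOf Λ (ModuleCat.of Λ (↥T × ↥S)), Ext1Zero Λ K B := by
      intro B hB
      exact ext1Zero_syzygy_left i p hses hG (hXL (cosyz B) (extGe1Zero_cosyz hB))
    have E2 : Ext1Zero Λ K Y₁ := ih K hKL hres Y₁ hY₁
    exact chase_main ι₁ φ hsesφ i p hses hG E1 E2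

end Assembly

end GorensteinFDC
open GorensteinFDC in
/-- If `T` is `n`-tilting, `S` strongly Gorenstein projective,
`U = T ⊕ S`, and `(L_U, R_U)` is the cotorsion pair with `R_U = U^{⊥∞}`, then
`L_U ∩ P_n = ^⊥(T^{⊥∞})`. -/
theorem statement5 (Λ : Type u) [Ring Λ] (n : ℕ) (T S : ModuleCat.{u} Λ)
    (hT : IsTilting Λ n T) (hS : IsStronglyGorensteinProjective Λ S)
    (L R : Set (ModuleCat.{u} Λ)) (hcp : IsCotorsionPair Λ L R)
    (hR : R = perpInfOf Λ (ModuleCat.of Λ (↥T × ↥S))) :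
    L ∩ {M | ProjDimLe Λ n M} = leftPerp Λ (perpInfOf Λ T) := by
  have hL : L = leftPerp Λ (perpInfOf Λ (ModuleCat.of Λ (↥T × ↥S))) := by
    rw [hcp.1, hR]
  apply Set.Subset.antisymm
  · rintro X ⟨hXL, hXpd⟩
    rw [hL] at hXL
    intro Y hY
    exact main_sub hT hS n X hXL hXpd Y hY
  · intro X hX
    constructor
    · rw [hL]
      intro B hB
      exact hX B (extGe1Zero_prod_left hB)
    · exact projDimLe_of_leftPerp hT.1 hX
end

section
/- Let Λ be a ring and let U and V be classes of Λ-modules, each closed under extensions and containing the zero module. If Ext¹_Λ(U,V) = 0 for all U ∈ U and V ∈ V, then U ⋆ V = filt(U ∪ V); that is, a module has a finite filtration with factors in U ∪ V if and only if it is an extension of a module in U by a module in V. -/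
open CategoryTheory Function

universe u

namespace Statement10Aux

open GorensteinFDC Submodule

variable (Λ : Type u) [Ring Λ] (U V : Set (ModuleCat.{u} Λ))

/-- `Good U V M`: M has a submodule iso to a member of `U` with quotient iso to a member
of `V`. -/
def Good (M : Type u) [AddCommGroup M] [Module Λ M] : Prop :=
  ∃ S : Submodule Λ M, (∃ A ∈ U, Nonempty (↥S ≃ₗ[Λ] ↥A)) ∧
    (∃ B ∈ V, Nonempty ((M ⧸ S) ≃ₗ[Λ] ↥B))

variable {Λ U V}

lemma good_congr {M N : Type u} [AddCommGroup M] [Module Λ M] [AddCommGroup N] [Module Λ N]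
    (e : M ≃ₗ[Λ] N) (h : Good Λ U V M) : Good Λ U V N := by
  obtain ⟨S, ⟨A, hA, ⟨eA⟩⟩, ⟨B, hB, ⟨eB⟩⟩⟩ := h
  exact ⟨S.map (e : M →ₗ[Λ] N), ⟨A, hA, ⟨(e.submoduleMap S).symm.trans eA⟩⟩,
    ⟨B, hB, ⟨(Submodule.Quotient.equiv S (S.map (e : M →ₗ[Λ] N)) e rfl).symm.trans eB⟩⟩⟩

/-- The second isomorphism-type statement: for `T ≤ S`, `S / (T ∩ S) ≃ image of S in M/T`. -/
noncomputable def quotComapEquivMap {M : Type u} [AddCommGroup M] [Module Λ M]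
    (T S : Submodule Λ M) :
    (↥S ⧸ T.comap S.subtype) ≃ₗ[Λ] ↥(S.map T.mkQ) := by
  have h1 : LinearMap.ker (T.mkQ ∘ₗ S.subtype) = T.comap S.subtype := by
    rw [LinearMap.ker_comp, Submodule.ker_mkQ]
  have h2 : LinearMap.range (T.mkQ ∘ₗ S.subtype) = S.map T.mkQ := by
    rw [LinearMap.range_comp, Submodule.range_subtype]
  exact (Submodule.quotEquivOfEq _ _ h1.symm).trans
    ((T.mkQ ∘ₗ S.subtype).quotKerEquivRange.trans (LinearEquiv.ofEq _ _ h2))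

/-- Build a SES of `ModuleCat` objects from a submodule with identified sub and quotient. -/
lemma ses_data {X : ModuleCat.{u} Λ} (S : Submodule Λ ↥X) {A B : ModuleCat.{u} Λ}
    (eA : ↥S ≃ₗ[Λ] ↥A) (eB : (↥X ⧸ S) ≃ₗ[Λ] ↥B) :
    ∃ (i : A ⟶ X) (p : X ⟶ B), IsSES Λ i p ∧
      LinearMap.range i.hom = S ∧ LinearMap.ker p.hom = S := by
  refine ⟨ModuleCat.ofHom (S.subtype ∘ₗ eA.symm.toLinearMap), ModuleCat.ofHom (eB.toLinearMap ∘ₗ S.mkQ), ⟨?_, ?_, ?_⟩, ?_, ?_⟩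
  · exact S.injective_subtype.comp eA.symm.injective
  · exact eB.surjective.comp S.mkQ_surjective
  · refine LinearMap.exact_iff.mpr ?_
    simp only [ModuleCat.hom_ofHom]
    rw [LinearMap.ker_comp, LinearMap.range_comp, LinearEquiv.range, Submodule.map_top,
      Submodule.range_subtype, LinearEquiv.ker, Submodule.comap_bot, Submodule.ker_mkQ]
  · simp only [ModuleCat.hom_ofHom]
    rw [LinearMap.range_comp, LinearEquiv.range, Submodule.map_top, Submodule.range_subtype]
  · simp only [ModuleCat.hom_ofHom]
    rw [LinearMap.ker_comp, LinearEquiv.ker, Submodule.comap_bot, Submodule.ker_mkQ]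

lemma star_of_good {X : ModuleCat.{u} Λ} (h : Good Λ U V ↥X) : X ∈ starClass Λ U V := by
  obtain ⟨S, ⟨A, hA, ⟨eA⟩⟩, ⟨B, hB, ⟨eB⟩⟩⟩ := h
  obtain ⟨i, p, hses, -, -⟩ := ses_data S eA eB
  exact ⟨A, B, i, p, hA, hB, hses⟩

lemma good_of_star {X : ModuleCat.{u} Λ} (h : X ∈ starClass Λ U V) : Good Λ U V ↥X := by
  obtain ⟨A, B, i, p, hA, hB, hi, hp, hexact⟩ := h
  refine ⟨LinearMap.range i.hom,
    ⟨A, hA, ⟨(LinearEquiv.ofInjective i.hom hi).symm⟩⟩,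
    ⟨B, hB, ?_⟩⟩
  have hker : LinearMap.ker p.hom = LinearMap.range i.hom :=
    LinearMap.exact_iff.mp hexact
  exact ⟨(Submodule.quotEquivOfEq _ _ hker.symm).trans
    (p.hom.quotKerEquivOfSurjective hp)⟩

end Statement10Aux

namespace Statement10Aux

open GorensteinFDC Submodule

variable {Λ : Type u} [Ring Λ] {U V : Set (ModuleCat.{u} Λ)}

lemma good_subsingleton (hU0 : ∃ Z ∈ U, Subsingleton ↥Z) (hV0 : ∃ Z ∈ V, Subsingleton ↥Z)
    (M : Type u) [AddCommGroup M] [Module Λ M] [Subsingleton M] : Good Λ U V M := by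
  obtain ⟨Z, hZ, hZs⟩ := hU0
  obtain ⟨Z', hZ', hZ's⟩ := hV0
  haveI : Subsingleton (M ⧸ (⊥ : Submodule Λ M)) :=
    (Submodule.mkQ_surjective _).subsingleton
  exact ⟨⊥, ⟨Z, hZ, ⟨LinearEquiv.ofSubsingleton _ _⟩⟩,
    ⟨Z', hZ', ⟨LinearEquiv.ofSubsingleton _ _⟩⟩⟩

lemma good_step (hUext : ExtensionClosed Λ U) (hVext : ExtensionClosed Λ V)
    (hperp : ∀ A ∈ U, ∀ B ∈ V, Ext1Zero Λ A B)
    {M : Type u} [AddCommGroup M] [Module Λ M] (S : Submodule Λ M)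
    (hS : Good Λ U V ↥S) {C : ModuleCat.{u} Λ} (hC : C ∈ U ∪ V)
    (eC : Nonempty ((M ⧸ S) ≃ₗ[Λ] ↥C)) : Good Λ U V M := by
  obtain ⟨eC⟩ := eC
  obtain ⟨S', ⟨A, hA, ⟨eA⟩⟩, ⟨B, hB, ⟨eB⟩⟩⟩ := hS
  set T : Submodule Λ M := S'.map S.subtype with hT
  have hTS : T ≤ S := by
    rw [hT]
    simpa using Submodule.map_subtype_le S S'
  have hcm : T.comap S.subtype = S' := by
    rw [hT, Submodule.comap_map_eq, Submodule.ker_subtype, sup_bot_eq]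
  -- ↥T ≃ A ∈ U
  have eTA : ↥T ≃ₗ[Λ] ↥A :=
    ((Submodule.comapSubtypeEquivOfLe hTS).symm.trans
      (LinearEquiv.ofEq _ _ hcm)).trans eA
  -- S₁ := S/T inside Q := M/T, with ↥S₁ ≃ B ∈ V
  set S₁ : Submodule Λ (M ⧸ T) := S.map T.mkQ with hS₁
  have eS₁ : ↥S₁ ≃ₗ[Λ] ↥B :=
    ((quotComapEquivMap T S).symm.trans (Submodule.quotEquivOfEq _ _ hcm)).trans eB
  -- (M/T)/S₁ ≃ M/S ≃ C
  have eQC : ((M ⧸ T) ⧸ S₁) ≃ₗ[Λ] ↥C :=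
    (Submodule.quotientQuotientEquivQuotient T S hTS).trans eC
  rcases hC with hC | hC
  · -- C ∈ U : splitting argument
    obtain ⟨i, p, hses, hri, hkp⟩ :=
      ses_data (X := ModuleCat.of Λ (M ⧸ T)) S₁ eS₁ eQC
    obtain ⟨s, hs⟩ := hperp C hC B hB _ i p hses
    let pl : (M ⧸ T) →ₗ[Λ] ↥C := p.hom
    let sl : ↥C →ₗ[Λ] (M ⧸ T) := s.hom
    have hkp' : LinearMap.ker pl = S₁ := hkp
    have hs' : ∀ c : ↥C, pl (sl c) = c := fun c =>
      congrArg (fun f : C ⟶ C => f c) hs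
    set W : Submodule Λ (M ⧸ T) := LinearMap.range sl with hW
    have hcompl : IsCompl W S₁ := by
      constructor
      · rw [disjoint_iff]
        ext x
        simp only [Submodule.mem_inf, Submodule.mem_bot, hW, LinearMap.mem_range, ← hkp',
          LinearMap.mem_ker]
        constructor
        · rintro ⟨⟨c, rfl⟩, hx⟩
          rw [hs'] at hx
          simp [hx]
        · rintro rfl
          exact ⟨⟨0, by simp⟩, by simp⟩
      · rw [codisjoint_iff, eq_top_iff]
        intro x _
        have h1 : x - sl (pl x) ∈ S₁ := by
          rw [← hkp', LinearMap.mem_ker, map_sub, hs', sub_self]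
        have hx : x = sl (pl x) + (x - sl (pl x)) := by abel
        rw [hx]
        exact Submodule.add_mem_sup (LinearMap.mem_range_self _ _) h1
    set S₂ : Submodule Λ M := W.comap T.mkQ with hS₂
    have hTS₂ : T ≤ S₂ := by
      intro x hx
      show T.mkQ x ∈ W
      have : T.mkQ x = 0 := (Submodule.Quotient.mk_eq_zero T).2 hx
      rw [this]; exact W.zero_mem
    have hmap : S₂.map T.mkQ = W :=
      Submodule.map_comap_eq_of_surjective (Submodule.mkQ_surjective T) W
    -- ↥W ≃ C
    have hsinj : Function.Injective sl :=
      Function.LeftInverse.injective hs'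
    have eWC : ↥W ≃ₗ[Λ] ↥C := (LinearEquiv.ofInjective _ hsinj).symm
    -- ↥S₂ ∈ U (as ModuleCat object) since it is an extension of C by A, both in U
    have hS₂U : ModuleCat.of Λ ↥S₂ ∈ U := by
      apply hUext
      apply star_of_good
      refine ⟨T.comap S₂.subtype, ⟨A, hA, ⟨(Submodule.comapSubtypeEquivOfLe hTS₂).trans eTA⟩⟩,
        ⟨C, hC, ⟨((quotComapEquivMap T S₂).trans (LinearEquiv.ofEq _ _ hmap)).trans eWC⟩⟩⟩
    -- M/S₂ ≃ B ∈ V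
    have eMS₂ : (M ⧸ S₂) ≃ₗ[Λ] ↥B :=
      (((Submodule.quotientQuotientEquivQuotient T S₂ hTS₂).symm.trans
        (Submodule.quotEquivOfEq _ _ (by rw [hmap]))).trans
        (Submodule.quotientEquivOfIsCompl W S₁ hcompl)).trans eS₁
    exact ⟨S₂, ⟨ModuleCat.of Λ ↥S₂, hS₂U, ⟨LinearEquiv.refl _ _⟩⟩, ⟨B, hB, ⟨eMS₂⟩⟩⟩
  · -- C ∈ V : M/T is an extension of C by B, both in V
    have hQV : ModuleCat.of Λ (M ⧸ T) ∈ V := by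
      apply hVext
      apply star_of_good
      exact ⟨S₁, ⟨B, hB, ⟨eS₁⟩⟩, ⟨C, hC, ⟨eQC⟩⟩⟩
    exact ⟨T, ⟨A, hA, ⟨eTA⟩⟩, ⟨ModuleCat.of Λ (M ⧸ T), hQV, ⟨LinearEquiv.refl _ _⟩⟩⟩

end Statement10Aux


open Statement10Aux Submodule

open GorensteinFDC in
/-- If `U`, `V` are extension closed classes containing the zero module
and `Ext¹_Λ(U, V) = 0` for all `U ∈ U`, `V ∈ V`, then `U ⋆ V = filt(U ∪ V)`. -/
theorem statement10 (Λ : Type u) [Ring Λ] (U V : Set (ModuleCat.{u} Λ))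
    (hUext : ExtensionClosed Λ U) (hVext : ExtensionClosed Λ V)
    (hU0 : ∃ Z ∈ U, Subsingleton ↥Z) (hV0 : ∃ Z ∈ V, Subsingleton ↥Z)
    (hperp : ∀ A ∈ U, ∀ B ∈ V, Ext1Zero Λ A B) :
    starClass Λ U V = {M | FinitelyFiltered Λ (U ∪ V) M} := by
  ext M
  simp only [Set.mem_setOf_eq]
  constructor
  · intro h
    obtain ⟨S, ⟨A, hA, ⟨eA⟩⟩, ⟨B, hB, ⟨eB⟩⟩⟩ := good_of_star h
    refine ⟨2, fun n => match n with | 0 => ⊥ | 1 => S | _ => ⊤, rfl, rfl, ?_, ?_⟩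
    · intro i hi
      interval_cases i
      · exact bot_le
      · exact le_top
    · intro i hi
      interval_cases i
      · refine ⟨A, Or.inl hA, ⟨?_⟩⟩
        exact (Submodule.quotEquivOfEqBot _
          (by show comap S.subtype ⊥ = ⊥; rw [Submodule.comap_bot, Submodule.ker_subtype])).trans eA
      · refine ⟨B, Or.inr hB, ⟨?_⟩⟩
        have e1 : ↥(Submodule.map S.mkQ ⊤) ≃ₗ[Λ] (↥M ⧸ S) :=
          (LinearEquiv.ofEq _ (⊤ : Submodule Λ (↥M ⧸ S))
            (by rw [Submodule.map_top, Submodule.range_mkQ])).trans Submodule.topEquiv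
        exact ((quotComapEquivMap S ⊤).trans e1).trans eB
  · rintro ⟨k, F, h0, hk, hmono, hfac⟩
    have key : ∀ i, i ≤ k → Good Λ U V ↥(F i) := by
      intro i
      induction i with
      | zero =>
        intro _
        rw [h0]
        exact good_subsingleton hU0 hV0 _
      | succ n ih =>
        intro hn
        have hnk : n < k := Nat.lt_of_succ_le hn
        have hgn := ih (Nat.le_of_lt hnk)
        obtain ⟨N, hN, eN⟩ := hfac n hnk
        exact good_step hUext hVext hperp (comap (F (n+1)).subtype (F n))
          (good_congr (Submodule.comapSubtypeEquivOfLe (hmono n hnk)).symm hgn) hN eN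
    have hkgood := key k le_rfl
    rw [hk] at hkgood
    exact star_of_good (good_congr Submodule.topEquiv hkgood)
end
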